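/- arXiv:1806.11271 — 3 statements merged into one kernel-verified Lean document; each statement's English description precedes it below -/
import Mathlib

section
/- Suppose a nonnegative rate R is achievable for the multicast channel under the energy constraint vector B⃗, i.e., for every ε ∈ (0,1) and δ > 0 there exist, for all sufficiently large n, a message set W, an encoder f : W → Xⁿ with (1/n)·log|W| > R − δ whose induced input distribution under a uniform message is B⃗-admissible, and decoders g_ℓ : Y(ℓ)ⁿ → W with max_{ℓ∈Θ} Pr[g_ℓ(Y(ℓ)₁ⁿ) ≠ W] < ε. Then R ≤ C(B⃗). Together with achievability, the operational capacity of the multicast channel equals C(B⃗). -/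
open scoped BigOperators

noncomputable section
set_option maxHeartbeats 1000000


/-- A probability vector on a finite alphabet. -/
def IsProbVec {α : Type} [Fintype α] (p : α → ℝ) : Prop :=
  (∀ a, 0 ≤ p a) ∧ (∑ a, p a) = 1

/-- A (row-stochastic) discrete channel. -/
def IsChannel {α β : Type} [Fintype β] (W : α → β → ℝ) : Prop :=
  ∀ x, (∀ y, 0 ≤ W x y) ∧ (∑ y, W x y) = 1

/-- The memoryless `n`-letter extension of a channel. -/
def nCh {α β : Type} (W : α → β → ℝ) (n : ℕ) (x : Fin n → α) (y : Fin n → β) : ℝ :=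
  ∏ i, W (x i) (y i)

/-- Output distribution induced by input distribution `p` through channel `W`. -/
def outDist {α β : Type} [Fintype α] (p : α → ℝ) (W : α → β → ℝ) (y : β) : ℝ :=
  ∑ x, p x * W x y

/-- Expected value `E[b(Y)]` of an energy function `b` at the channel output. -/
def outEnergy {α β : Type} [Fintype α] [Fintype β] (p : α → ℝ) (W : α → β → ℝ)
    (b : β → ℝ) : ℝ :=
  ∑ y, outDist p W y * b y

/-- Additive block extension of an energy function. -/
def blockE {β : Type} (b : β → ℝ) {n : ℕ} (y : Fin n → β) : ℝ := ∑ i, b (y i)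

/-- Mutual information `I(X;Y)` between the input `X ~ p` and the output of channel `W`. -/
def mutInfo {α β : Type} [Fintype α] [Fintype β] (p : α → ℝ) (W : α → β → ℝ) : ℝ :=
  ∑ x, ∑ y, p x * W x y * Real.log (W x y / outDist p W y)

/-- The `n`-th multicast capacity-energy function with energy constraint vector `B`. -/
def CnVec {𝓧 : Type} [Fintype 𝓧] {L : ℕ} {𝓨 : Fin L → Type} [∀ ℓ, Fintype (𝓨 ℓ)]
    (W : ∀ ℓ, 𝓧 → 𝓨 ℓ → ℝ) (b : ∀ ℓ, 𝓨 ℓ → ℝ) (B : Fin L → ℝ) (n : ℕ) : ℝ :=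
  sSup { r | ∃ p : (Fin n → 𝓧) → ℝ, IsProbVec p ∧
      (∀ ℓ, (n : ℝ) * B ℓ ≤ outEnergy p (nCh (W ℓ) n) (blockE (b ℓ))) ∧
      r = ⨅ ℓ, mutInfo p (nCh (W ℓ) n) }

/-- The multicast capacity-energy function `C(B⃗) = sup_n C_n(B⃗)/n`. -/
def CcapVec {𝓧 : Type} [Fintype 𝓧] {L : ℕ} {𝓨 : Fin L → Type} [∀ ℓ, Fintype (𝓨 ℓ)]
    (W : ∀ ℓ, 𝓧 → 𝓨 ℓ → ℝ) (b : ∀ ℓ, 𝓨 ℓ → ℝ) (B : Fin L → ℝ) : ℝ :=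
  ⨆ n : ℕ+, CnVec W b B n / (n : ℝ)

/-- Input distribution on `𝓧ⁿ` induced by a uniformly distributed message through encoder `f`. -/
def inducedDist {𝓧 : Type} [Fintype 𝓧] [DecidableEq 𝓧] {n M : ℕ}
    (f : Fin M → (Fin n → 𝓧)) (x : Fin n → 𝓧) : ℝ :=
  ((Finset.univ.filter (fun w => f w = x)).card : ℝ) / M

/-- Average error probability of the code `(f, g)` over channel `W`. -/
def errProb {𝓧 𝓨 : Type} [Fintype 𝓨] {n M : ℕ}
    (W : 𝓧 → 𝓨 → ℝ) (f : Fin M → (Fin n → 𝓧)) (g : (Fin n → 𝓨) → Fin M) : ℝ :=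
  (M : ℝ)⁻¹ * ∑ w, ∑ y, if g y = w then 0 else nCh W n (f w) y



/-- Log-sum inequality. -/
lemma log_sum_ineq {ι : Type*} (s : Finset ι) (a b : ι → ℝ)
    (ha : ∀ i ∈ s, 0 ≤ a i) (hb : ∀ i ∈ s, 0 ≤ b i)
    (hab : ∀ i ∈ s, b i = 0 → a i = 0) :
    (∑ i ∈ s, a i) * Real.log ((∑ i ∈ s, a i) / (∑ i ∈ s, b i)) ≤
      ∑ i ∈ s, a i * Real.log (a i / b i) := by
  classical
  set t := s.filter (fun i => b i ≠ 0) with ht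
  have hat : ∑ i ∈ t, a i = ∑ i ∈ s, a i :=
    Finset.sum_filter_of_ne fun i hi hne h0 => hne (hab i hi h0)
  have hbt : ∑ i ∈ t, b i = ∑ i ∈ s, b i :=
    Finset.sum_filter_of_ne fun i hi hne => hne
  have hterm : ∑ i ∈ t, a i * Real.log (a i / b i)
      = ∑ i ∈ s, a i * Real.log (a i / b i) := by
    refine Finset.sum_filter_of_ne fun i hi hne h0 => ?_
    exact hne (by rw [hab i hi h0, zero_mul])
  rw [← hat, ← hbt, ← hterm]
  rcases Finset.eq_empty_or_nonempty t with h | hne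
  · simp [h]
  have hbpos : ∀ i ∈ t, 0 < b i := fun i hi =>
    lt_of_le_of_ne (hb i (Finset.mem_filter.mp hi).1) (Ne.symm (Finset.mem_filter.mp hi).2)
  have hT : 0 < ∑ i ∈ t, b i := Finset.sum_pos hbpos hne
  set T := ∑ i ∈ t, b i with hTdef
  have hanon : ∀ i ∈ t, 0 ≤ a i := fun i hi => ha i (Finset.mem_filter.mp hi).1
  have jensen := Real.convexOn_mul_log.map_sum_le (t := t) (w := fun i => b i / T)
    (p := fun i => a i / b i)
    (fun i hi => div_nonneg (le_of_lt (hbpos i hi)) hT.le)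
    (by rw [← Finset.sum_div]; field_simp; exact hTdef.symm)
    (fun i hi => Set.mem_Ici.mpr (div_nonneg (hanon i hi) (hbpos i hi).le))
  have harg : ∑ i ∈ t, (b i / T) • (a i / b i) = (∑ i ∈ t, a i) / T := by
    rw [Finset.sum_div]
    refine Finset.sum_congr rfl fun i hi => ?_
    have hbi := (hbpos i hi).ne'
    rw [smul_eq_mul]; field_simp
  rw [harg] at jensen
  have hrhs : ∑ i ∈ t, (b i / T) • ((a i / b i) * Real.log (a i / b i))
      = (∑ i ∈ t, a i * Real.log (a i / b i)) / T := by
    rw [Finset.sum_div]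
    refine Finset.sum_congr rfl fun i hi => ?_
    have hbi := (hbpos i hi).ne'
    rw [smul_eq_mul]; field_simp
  rw [hrhs] at jensen
  calc (∑ i ∈ t, a i) * Real.log ((∑ i ∈ t, a i) / T)
      = T * ((∑ i ∈ t, a i) / T * Real.log ((∑ i ∈ t, a i) / T)) := by
        field_simp
    _ ≤ T * ((∑ i ∈ t, a i * Real.log (a i / b i)) / T) :=
        mul_le_mul_of_nonneg_left jensen hT.le
    _ = ∑ i ∈ t, a i * Real.log (a i / b i) := by field_simp

lemma nCh_isChannel {α β : Type} [Fintype β] {W : α → β → ℝ} (hW : IsChannel W) (n : ℕ) :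
    IsChannel (nCh W n) := by
  intro x
  refine ⟨fun y => Finset.prod_nonneg fun i _ => (hW (x i)).1 (y i), ?_⟩
  have h1 : (∑ y : Fin n → β, nCh W n x y) = ∏ i, ∑ z : β, W (x i) z := by
    rw [Finset.prod_univ_sum, Fintype.piFinset_univ]; rfl
  rw [h1]
  exact Finset.prod_eq_one fun i _ => (hW (x i)).2

lemma sum_inducedDist_mul {𝓧 : Type} [Fintype 𝓧] [DecidableEq 𝓧] {n M : ℕ}
    (f : Fin M → (Fin n → 𝓧)) (h : (Fin n → 𝓧) → ℝ) :
    ∑ x, inducedDist f x * h x = (M : ℝ)⁻¹ * ∑ w, h (f w) := by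
  classical
  have key : ∀ x : Fin n → 𝓧, inducedDist f x * h x
      = (M : ℝ)⁻¹ * ∑ w ∈ Finset.univ.filter (fun w => f w = x), h (f w) := by
    intro x
    rw [Finset.sum_congr rfl (fun w hw => by rw [(Finset.mem_filter.mp hw).2]),
      Finset.sum_const, nsmul_eq_mul]
    simp only [inducedDist]; ring
  rw [Finset.sum_congr rfl fun x _ => key x, ← Finset.mul_sum, Finset.sum_fiberwise]

lemma inducedDist_isProbVec {𝓧 : Type} [Fintype 𝓧] [DecidableEq 𝓧] {n M : ℕ} (hM : 0 < M)
    (f : Fin M → (Fin n → 𝓧)) : IsProbVec (inducedDist f) := by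
  constructor
  · intro x; exact div_nonneg (Nat.cast_nonneg _) (Nat.cast_nonneg _)
  · have := sum_inducedDist_mul f (fun _ => (1 : ℝ))
    simp only [mul_one] at this
    rw [this, Finset.sum_const, Finset.card_univ, Fintype.card_fin, nsmul_eq_mul, mul_one]
    exact inv_mul_cancel₀ (by exact_mod_cast hM.ne')

lemma outDist_nonneg {α β : Type} [Fintype α] [Fintype β] {p : α → ℝ} (hp : IsProbVec p)
    {W : α → β → ℝ} (hW : IsChannel W) (y : β) : 0 ≤ outDist p W y :=
  Finset.sum_nonneg fun x _ => mul_nonneg (hp.1 x) ((hW x).1 y)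

lemma outDist_sum {α β : Type} [Fintype α] [Fintype β] {p : α → ℝ} (hp : IsProbVec p)
    {W : α → β → ℝ} (hW : IsChannel W) : ∑ y, outDist p W y = 1 := by
  unfold outDist
  rw [Finset.sum_comm]
  calc ∑ x, ∑ y, p x * W x y = ∑ x, p x := by
        refine Finset.sum_congr rfl fun x _ => ?_
        rw [← Finset.mul_sum, (hW x).2, mul_one]
    _ = 1 := hp.2

lemma mutInfo_le_log_card {α β : Type} [Fintype α] [Fintype β] {p : α → ℝ} (hp : IsProbVec p)
    {V : α → β → ℝ} (hV : IsChannel V) :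
    mutInfo p V ≤ Real.log (Fintype.card α) := by
  classical
  have hcard : 0 < Fintype.card α := by
    by_contra h
    have : Fintype.card α = 0 := by omega
    have he : IsEmpty α := Fintype.card_eq_zero_iff.mp this
    have := hp.2
    rw [Finset.univ_eq_empty, Finset.sum_empty] at this
    norm_num at this
  -- termwise bound
  have step1 : mutInfo p V ≤ ∑ x, -(p x * Real.log (p x)) := by
    unfold mutInfo
    have inner : ∀ x : α, ∑ y, p x * V x y * Real.log (V x y / outDist p V y)
        ≤ -(p x * Real.log (p x)) := by
      intro x
      have hb : ∀ y : β, p x * V x y * Real.log (V x y / outDist p V y)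
          ≤ V x y * (-(p x * Real.log (p x))) := by
        intro y
        rcases eq_or_lt_of_le (hp.1 x) with h0 | hpx
        · simp [← h0]
        rcases eq_or_lt_of_le ((hV x).1 y) with h0 | hvx
        · simp [← h0]
        have hQ : p x * V x y ≤ outDist p V y := by
          refine Finset.single_le_sum (f := fun x' => p x' * V x' y)
            (fun x' _ => mul_nonneg (hp.1 x') ((hV x').1 y)) (Finset.mem_univ x)
        have hQpos : 0 < outDist p V y := lt_of_lt_of_le (mul_pos hpx hvx) hQ
        have hle : V x y / outDist p V y ≤ (p x)⁻¹ := by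
          rw [div_le_iff₀ hQpos]
          calc V x y = (p x)⁻¹ * (p x * V x y) := by field_simp
            _ ≤ (p x)⁻¹ * outDist p V y := by
                exact mul_le_mul_of_nonneg_left hQ (inv_nonneg.mpr hpx.le)
        have hlog : Real.log (V x y / outDist p V y) ≤ Real.log (p x)⁻¹ :=
          Real.log_le_log (div_pos hvx hQpos) hle
        rw [Real.log_inv] at hlog
        calc p x * V x y * Real.log (V x y / outDist p V y)
            ≤ p x * V x y * (-Real.log (p x)) := by
              exact mul_le_mul_of_nonneg_left hlog (mul_nonneg hpx.le hvx.le)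
          _ = V x y * (-(p x * Real.log (p x))) := by ring
      calc ∑ y, p x * V x y * Real.log (V x y / outDist p V y)
          ≤ ∑ y, V x y * (-(p x * Real.log (p x))) := Finset.sum_le_sum fun y _ => hb y
        _ = -(p x * Real.log (p x)) := by
            rw [← Finset.sum_mul, (hV x).2, one_mul]
    exact Finset.sum_le_sum fun x _ => inner x
  -- entropy bound via log-sum
  have step2 : ∑ x, -(p x * Real.log (p x)) ≤ Real.log (Fintype.card α) := by
    have := log_sum_ineq Finset.univ p (fun _ => (1 : ℝ))
      (fun x _ => hp.1 x) (fun _ _ => zero_le_one) (fun x _ h => absurd h one_ne_zero)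
    rw [hp.2, Finset.sum_const, Finset.card_univ, nsmul_eq_mul, mul_one, one_mul] at this
    have hlog : Real.log (1 / (Fintype.card α : ℝ)) = -Real.log (Fintype.card α) := by
      rw [one_div, Real.log_inv]
    rw [hlog] at this
    have : -Real.log (Fintype.card α) ≤ ∑ x, p x * Real.log (p x) := by
      refine le_trans (le_of_eq rfl) (le_trans this (le_of_eq ?_))
      exact Finset.sum_congr rfl fun x _ => by rw [div_one]
    calc ∑ x, -(p x * Real.log (p x)) = -∑ x, p x * Real.log (p x) := by
          rw [Finset.sum_neg_distrib]
      _ ≤ Real.log (Fintype.card α) := by linarith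
  linarith

lemma binary_bound {e : ℝ} (he0 : 0 ≤ e) (he1 : e ≤ 1) {M : ℕ} (hM : 0 < M) :
    (1 - e) * Real.log M - Real.log 2 ≤
      (1 - e) * Real.log ((1 - e) / (M : ℝ)⁻¹) + e * Real.log (e / (1 - (M : ℝ)⁻¹)) := by
  have hM1 : (1 : ℝ) ≤ M := by exact_mod_cast hM
  have hMne : (M : ℝ)⁻¹ ≠ 0 := inv_ne_zero (by positivity)
  -- entropy ≥ -log 2
  have h2 : -Real.log 2 ≤ (1 - e) * Real.log (1 - e) + e * Real.log e := by
    have := log_sum_ineq Finset.univ (fun t : Bool => if t then 1 - e else e)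
      (fun _ => (1 : ℝ))
      (fun t _ => by cases t <;> simp [he0, sub_nonneg.mpr he1])
      (fun _ _ => zero_le_one) (fun t _ h => absurd h one_ne_zero)
    simp only [Fintype.sum_bool, if_true, Bool.false_eq_true, if_false, div_one] at this
    have hs : (1 - e) + e = 1 := by ring
    rw [hs] at this
    norm_num at this
    calc -Real.log 2 = 1 * Real.log (1 / 2) := by
          rw [one_div, Real.log_inv, one_mul]
      _ ≤ (1 - e) * Real.log (1 - e) + e * Real.log e := by
          rw [one_mul]
          convert this using 2 <;> norm_num
  have h3 : (1 - e) * Real.log ((1 - e) / (M : ℝ)⁻¹)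
      = (1 - e) * Real.log (1 - e) + (1 - e) * Real.log M := by
    rcases eq_or_lt_of_le (sub_nonneg.mpr he1) with h0 | hpos
    · rw [← h0]; ring
    · rw [Real.log_div hpos.ne' hMne, Real.log_inv]; ring
  have h4 : e * Real.log e ≤ e * Real.log (e / (1 - (M : ℝ)⁻¹)) := by
    rcases eq_or_lt_of_le he0 with h0 | hepos
    · rw [← h0]; simp
    have hMinv : (0 : ℝ) ≤ 1 - (M : ℝ)⁻¹ := by
      have : (M : ℝ)⁻¹ ≤ 1 := by
        rw [inv_le_one_iff₀]; right; exact hM1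
      linarith
    rcases eq_or_lt_of_le hMinv with h0 | hpos
    · rw [← h0, div_zero, Real.log_zero, mul_zero]
      exact mul_nonpos_of_nonneg_of_nonpos he0 (Real.log_nonpos he0 he1)
    · have hle : Real.log (1 - (M : ℝ)⁻¹) ≤ 0 := Real.log_nonpos hpos.le (by
        have : (0:ℝ) < (M:ℝ)⁻¹ := by positivity
        linarith)
      rw [Real.log_div hepos.ne' hpos.ne']
      nlinarith
  rw [h3]
  nlinarith

lemma converse_one {𝓧 𝓨 : Type} [Fintype 𝓧] [DecidableEq 𝓧] [Fintype 𝓨] {n M : ℕ}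
    (hM : 0 < M) (W : 𝓧 → 𝓨 → ℝ) (hW : IsChannel W)
    (f : Fin M → (Fin n → 𝓧)) (g : (Fin n → 𝓨) → Fin M) :
    (1 - errProb W f g) * Real.log M - Real.log 2 ≤ mutInfo (inducedDist f) (nCh W n) := by
  classical
  set V := nCh W n with hVdef
  have hV : IsChannel V := nCh_isChannel hW n
  set p := inducedDist f with hpdef
  have hp : IsProbVec p := inducedDist_isProbVec hM f
  set Q := outDist p V with hQdef
  have hMR : (0:ℝ) < M := by exact_mod_cast hM
  have hMinv : (0:ℝ) < (M:ℝ)⁻¹ := by positivity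
  have hQnn : ∀ y, 0 ≤ Q y :=
    fun y => Finset.sum_nonneg fun x _ => mul_nonneg (hp.1 x) ((hV x).1 y)
  have hQsum : ∑ y, Q y = 1 := outDist_sum hp hV
  -- lower bound on p at codewords
  have hpf : ∀ w, (M:ℝ)⁻¹ ≤ p (f w) := by
    intro w
    have hcard : (1:ℝ) ≤ ((Finset.univ.filter (fun w' => f w' = f w)).card : ℝ) := by
      exact_mod_cast Finset.card_pos.mpr ⟨w, by simp⟩
    show (M:ℝ)⁻¹ ≤ ((Finset.univ.filter (fun w' => f w' = f w)).card : ℝ) / M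
    rw [div_eq_mul_inv]
    exact le_mul_of_one_le_left hMinv.le hcard
  -- absolute continuity
  have hQac : ∀ (w : Fin M) (y : Fin n → 𝓨), Q y = 0 → V (f w) y = 0 := by
    intro w y h0
    have h0' : ∑ x, p x * V x y = 0 := h0
    have hterm : p (f w) * V (f w) y = 0 :=
      (Finset.sum_eq_zero_iff_of_nonneg
        (fun x _ => mul_nonneg (hp.1 x) ((hV x).1 y))).mp h0' (f w) (Finset.mem_univ _)
    have hpw : p (f w) ≠ 0 := ne_of_gt (lt_of_lt_of_le hMinv (hpf w))
    rcases mul_eq_zero.mp hterm with h | h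
    · exact absurd h hpw
    · exact h
  set F : Fin M × (Fin n → 𝓨) → ℝ := fun wy => (M:ℝ)⁻¹ * V (f wy.1) wy.2 with hF
  set G : Fin M × (Fin n → 𝓨) → ℝ := fun wy => (M:ℝ)⁻¹ * Q wy.2 with hG
  have hFnn : ∀ wy, 0 ≤ F wy := fun wy => mul_nonneg hMinv.le ((hV _).1 _)
  have hGnn : ∀ wy, 0 ≤ G wy := fun wy => mul_nonneg hMinv.le (hQnn _)
  have hGac : ∀ wy, G wy = 0 → F wy = 0 := by
    intro wy h0
    have hQ0 : Q wy.2 = 0 := by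
      rcases mul_eq_zero.mp h0 with h | h
      · exact absurd h hMinv.ne'
      · exact h
    rw [hF]; simp only []
    rw [hQac wy.1 wy.2 hQ0, mul_zero]
  have hlograt : ∀ wy : Fin M × (Fin n → 𝓨),
      F wy / G wy = V (f wy.1) wy.2 / Q wy.2 :=
    fun wy => mul_div_mul_left _ _ hMinv.ne'
  -- rewrite mutual information
  have hmut : mutInfo p V = ∑ wy : Fin M × (Fin n → 𝓨), F wy * Real.log (F wy / G wy) := by
    have e1 : mutInfo p V = ∑ x, p x * (∑ y, V x y * Real.log (V x y / Q y)) := by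
      unfold mutInfo
      refine Finset.sum_congr rfl fun x _ => ?_
      rw [Finset.mul_sum]
      exact Finset.sum_congr rfl fun y _ => by rw [hQdef]; ring
    rw [e1, hpdef, sum_inducedDist_mul f, Finset.mul_sum, Fintype.sum_prod_type]
    refine Finset.sum_congr rfl fun w _ => ?_
    rw [Finset.mul_sum]
    refine Finset.sum_congr rfl fun y _ => ?_
    rw [hlograt (w, y)]
    show (M:ℝ)⁻¹ * (V (f w) y * Real.log (V (f w) y / Q y))
        = (M:ℝ)⁻¹ * V (f w) y * Real.log (V (f w) y / Q y)
    ring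
  -- total masses
  have hsumF : ∑ wy : Fin M × (Fin n → 𝓨), F wy = 1 := by
    rw [Fintype.sum_prod_type]
    have : ∀ w : Fin M, ∑ y, F (w, y) = (M:ℝ)⁻¹ := by
      intro w
      show ∑ y, (M:ℝ)⁻¹ * V (f w) y = (M:ℝ)⁻¹
      rw [← Finset.mul_sum, (hV (f w)).2, mul_one]
    rw [Finset.sum_congr rfl fun w _ => this w, Finset.sum_const, Finset.card_univ,
      Fintype.card_fin, nsmul_eq_mul]
    field_simp
  have hsumG : ∑ wy : Fin M × (Fin n → 𝓨), G wy = 1 := by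
    rw [Fintype.sum_prod_type]
    have : ∀ w : Fin M, ∑ y, G (w, y) = (M:ℝ)⁻¹ := by
      intro w
      show ∑ y, (M:ℝ)⁻¹ * Q y = (M:ℝ)⁻¹
      rw [← Finset.mul_sum, hQsum, mul_one]
    rw [Finset.sum_congr rfl fun w _ => this w, Finset.sum_const, Finset.card_univ,
      Fintype.card_fin, nsmul_eq_mul]
    field_simp
  set S₁ := Finset.univ.filter (fun wy : Fin M × (Fin n → 𝓨) => g wy.2 = wy.1) with hS₁
  set S₀ := Finset.univ.filter (fun wy : Fin M × (Fin n → 𝓨) => ¬ g wy.2 = wy.1) with hS₀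
  have hsplitF : ∑ wy ∈ S₁, F wy + ∑ wy ∈ S₀, F wy = 1 := by
    rw [hS₁, hS₀, Finset.sum_filter_add_sum_filter_not, hsumF]
  have hsplitG : ∑ wy ∈ S₁, G wy + ∑ wy ∈ S₀, G wy = 1 := by
    rw [hS₁, hS₀, Finset.sum_filter_add_sum_filter_not, hsumG]
  -- error probability
  have herr : errProb W f g = ∑ wy ∈ S₀, F wy := by
    rw [hS₀, Finset.sum_filter]
    unfold errProb
    rw [Finset.mul_sum, Fintype.sum_prod_type]
    refine Finset.sum_congr rfl fun w _ => ?_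
    rw [Finset.mul_sum]
    refine Finset.sum_congr rfl fun y _ => ?_
    by_cases h : g y = w
    · simp [h, hF]
    · simp [h, hF, hVdef]
  have hG1 : ∑ wy ∈ S₁, G wy = (M:ℝ)⁻¹ := by
    rw [hS₁, Finset.sum_filter, Fintype.sum_prod_type, Finset.sum_comm]
    have : ∀ y : Fin n → 𝓨, (∑ w : Fin M, if g y = w then G (w, y) else 0) = (M:ℝ)⁻¹ * Q y := by
      intro y
      rw [Finset.sum_ite_eq]
      simp [hG]
    rw [Finset.sum_congr rfl fun y _ => this y, ← Finset.mul_sum, hQsum, mul_one]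
  have he0 : 0 ≤ errProb W f g := by
    rw [herr]; exact Finset.sum_nonneg fun wy _ => hFnn wy
  have hF1 : ∑ wy ∈ S₁, F wy = 1 - errProb W f g := by rw [herr]; linarith
  have hG0 : ∑ wy ∈ S₀, G wy = 1 - (M:ℝ)⁻¹ := by rw [← hG1]; linarith
  have he1 : errProb W f g ≤ 1 := by
    have h := Finset.sum_nonneg (fun wy _ => hFnn wy) (s := S₁)
    linarith [hF1]
  -- log-sum on each part
  have hls1 := log_sum_ineq S₁ F G (fun wy _ => hFnn wy) (fun wy _ => hGnn wy)
    (fun wy _ => hGac wy)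
  have hls0 := log_sum_ineq S₀ F G (fun wy _ => hFnn wy) (fun wy _ => hGnn wy)
    (fun wy _ => hGac wy)
  rw [hF1, hG1] at hls1
  rw [← herr, hG0] at hls0
  have hfinal : mutInfo p V = ∑ wy ∈ S₁, F wy * Real.log (F wy / G wy)
      + ∑ wy ∈ S₀, F wy * Real.log (F wy / G wy) := by
    rw [hmut, hS₁, hS₀, Finset.sum_filter_add_sum_filter_not]
  have hbb := binary_bound he0 he1 hM
  rw [hfinal]
  calc (1 - errProb W f g) * Real.log M - Real.log 2
      ≤ (1 - errProb W f g) * Real.log ((1 - errProb W f g) / (M:ℝ)⁻¹)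
        + errProb W f g * Real.log (errProb W f g / (1 - (M:ℝ)⁻¹)) := hbb
    _ ≤ _ := add_le_add hls1 hls0

/-- **Converse for multicast simultaneous information/energy transmission.**
If a nonnegative rate `R` is achievable for the multicast channel under the energy
constraint vector `B⃗` — i.e. for every `ε ∈ (0,1)` and `δ > 0`, for all sufficiently
large `n` there are a message set, an encoder of rate exceeding `R - δ` whose induced
input distribution is `B⃗`-admissible, and decoders with worst-case average error
probability below `ε` — then `R ≤ C(B⃗)`. -/
theorem multicast_converse
    {𝓧 : Type} [Fintype 𝓧] [DecidableEq 𝓧] [Nonempty 𝓧] {L : ℕ} (hL : 0 < L)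
    {𝓨 : Fin L → Type} [∀ ℓ, Fintype (𝓨 ℓ)]
    (W : ∀ ℓ, 𝓧 → 𝓨 ℓ → ℝ) (hW : ∀ ℓ, IsChannel (W ℓ))
    (b : ∀ ℓ, 𝓨 ℓ → ℝ) (hb : ∀ ℓ y, 0 ≤ b ℓ y)
    (B : Fin L → ℝ) (R : ℝ) (hR0 : 0 ≤ R)
    (hach : ∀ ε δ : ℝ, 0 < ε → ε < 1 → 0 < δ →
      ∃ N : ℕ, ∀ n : ℕ, N ≤ n → 0 < n →
        ∃ (M : ℕ) (_ : 0 < M)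
          (f : Fin M → (Fin n → 𝓧)) (g : ∀ ℓ, (Fin n → 𝓨 ℓ) → Fin M),
          R - δ < Real.log M / n ∧
          (∀ ℓ, (n : ℝ) * B ℓ ≤ outEnergy (inducedDist f) (nCh (W ℓ) n) (blockE (b ℓ))) ∧
          (∀ ℓ, errProb (W ℓ) f (g ℓ) < ε)) :
    R ≤ CcapVec W b B := by
  classical
  haveI : Nonempty (Fin L) := ⟨⟨0, hL⟩⟩
  set K : ℝ := Real.log (Fintype.card 𝓧) with hKdef
  have hK0 : 0 ≤ K := Real.log_nonneg (by exact_mod_cast Fintype.card_pos)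
  -- upper bound for every element of the CnVec set
  have hset : ∀ n : ℕ, ∀ r ∈ { r | ∃ p : (Fin n → 𝓧) → ℝ, IsProbVec p ∧
      (∀ ℓ, (n : ℝ) * B ℓ ≤ outEnergy p (nCh (W ℓ) n) (blockE (b ℓ))) ∧
      r = ⨅ ℓ, mutInfo p (nCh (W ℓ) n) }, r ≤ (n : ℝ) * K := by
    rintro n r ⟨p, hp, -, rfl⟩
    have h1 : (⨅ ℓ, mutInfo p (nCh (W ℓ) n)) ≤ mutInfo p (nCh (W ⟨0, hL⟩) n) :=
      ciInf_le (Set.Finite.bddBelow (Set.finite_range _)) (⟨0, hL⟩ : Fin L)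
    refine le_trans h1 (le_trans (mutInfo_le_log_card hp (nCh_isChannel (hW _) n)) ?_)
    have hcard : (Fintype.card (Fin n → 𝓧) : ℝ) = (Fintype.card 𝓧 : ℝ) ^ n := by
      rw [Fintype.card_fun, Fintype.card_fin]; push_cast; ring
    rw [hcard, Real.log_pow, ← hKdef]
  have hCn_le : ∀ n : ℕ, CnVec W b B n ≤ (n : ℝ) * K := fun n =>
    Real.sSup_le (hset n) (by positivity)
  have hbdd : BddAbove (Set.range fun n : ℕ+ => CnVec W b B n / (n : ℝ)) := by
    refine ⟨K, ?_⟩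
    rintro x ⟨n, rfl⟩
    have hnpos : (0:ℝ) < ((n : ℕ) : ℝ) := by exact_mod_cast n.pos
    rw [div_le_iff₀ hnpos]
    calc CnVec W b B n ≤ ((n : ℕ) : ℝ) * K := hCn_le n
      _ = K * ((n : ℕ) : ℝ) := by ring
  by_contra hcon
  push_neg at hcon
  set C := CcapVec W b B with hC
  have hθ : 0 < R - C := sub_pos.mpr hcon
  set δ : ℝ := min ((R - C) / (R + 3)) (1/2) with hδdef
  have hδ0 : 0 < δ := lt_min (div_pos hθ (by linarith)) (by norm_num)
  have hδ1 : δ < 1 := lt_of_le_of_lt (min_le_right _ _) (by norm_num)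
  obtain ⟨N, hN⟩ := hach δ δ hδ0 hδ1 hδ0
  set n : ℕ := max N (⌈Real.log 2 / δ⌉₊ + 1) with hn
  have hn0 : 0 < n := lt_of_lt_of_le (Nat.succ_pos _) (le_max_right _ _)
  have hnR : (0:ℝ) < (n : ℝ) := by exact_mod_cast hn0
  obtain ⟨M, hM, f, g, hrate, hadm, herr⟩ := hN n (le_max_left _ _) hn0
  have hMlog : 0 ≤ Real.log M := Real.log_nonneg (by exact_mod_cast hM)
  have key : ∀ ℓ, (1 - δ) * Real.log M - Real.log 2
      ≤ mutInfo (inducedDist f) (nCh (W ℓ) n) := by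
    intro ℓ
    have h1 := converse_one hM (W ℓ) (hW ℓ) f (g ℓ)
    have h2 := mul_le_mul_of_nonneg_right (herr ℓ).le hMlog
    nlinarith
  have hmem : (⨅ ℓ, mutInfo (inducedDist f) (nCh (W ℓ) n)) ∈
      { r | ∃ p : (Fin n → 𝓧) → ℝ, IsProbVec p ∧
        (∀ ℓ, (n : ℝ) * B ℓ ≤ outEnergy p (nCh (W ℓ) n) (blockE (b ℓ))) ∧
        r = ⨅ ℓ, mutInfo p (nCh (W ℓ) n) } :=
    ⟨inducedDist f, inducedDist_isProbVec hM f, hadm, rfl⟩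
  have hCn_ge : (1 - δ) * Real.log M - Real.log 2 ≤ CnVec W b B n :=
    le_trans (le_ciInf key) (le_csSup ⟨(n : ℝ) * K, fun r hr => hset n r hr⟩ hmem)
  have hsup : CnVec W b B n / (n : ℝ) ≤ C := le_ciSup hbdd ⟨n, hn0⟩
  have hlog2n : Real.log 2 / (n : ℝ) ≤ δ := by
    have h1 : Real.log 2 / δ ≤ (n : ℝ) := by
      calc Real.log 2 / δ ≤ (⌈Real.log 2 / δ⌉₊ : ℝ) := Nat.le_ceil _
        _ ≤ (n : ℝ) := by exact_mod_cast le_trans (Nat.le_succ _) (le_max_right N _)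
    rw [div_le_iff₀ hδ0] at h1
    rw [div_le_iff₀ hnR]
    nlinarith
  have hstep : (1 - δ) * (R - δ) - δ ≤ C := by
    have h6 : ((1 - δ) * Real.log M - Real.log 2) / (n : ℝ) ≤ CnVec W b B n / (n : ℝ) := by
      gcongr
    have h7 : (1 - δ) * (R - δ) ≤ (1 - δ) * (Real.log M / (n : ℝ)) :=
      mul_le_mul_of_nonneg_left (le_of_lt hrate) (by linarith)
    have h8 : ((1 - δ) * Real.log M - Real.log 2) / (n : ℝ)
        = (1 - δ) * (Real.log M / (n : ℝ)) - Real.log 2 / (n : ℝ) := by ring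
    have h9 := le_trans h6 hsup
    rw [h8] at h9
    linarith
  have hδle : δ * (R + 3) ≤ R - C :=
    (le_div_iff₀ (by linarith)).mp (min_le_left ((R - C) / (R + 3)) (1/2))
  nlinarith [hstep, hδle, hδ0, sq_nonneg δ]

end
end

section
/- For any multicast discrete memoryless channel, any positive integer n, and any B with 0 ≤ B ≤ B_max, the n-th multicast capacity-energy function single-letterizes: C_n(B) = n·C_1(B). -/
open scoped BigOperators

noncomputable section

/-- The `n`-th multicast capacity-energy function with common energy function `b` and
common scalar energy constraint `B`:
`C_n(B) = max_{B-admissible X₁ⁿ} min_ℓ I(X₁ⁿ; Y(ℓ)₁ⁿ)`. -/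
def CnEq {𝓧 𝓨 : Type} [Fintype 𝓧] [Fintype 𝓨] {L : ℕ}
    (W : Fin L → 𝓧 → 𝓨 → ℝ) (b : 𝓨 → ℝ) (B : ℝ) (n : ℕ) : ℝ :=
  sSup { r | ∃ p : (Fin n → 𝓧) → ℝ, IsProbVec p ∧
      (∀ ℓ, (n : ℝ) * B ≤ outEnergy p (nCh (W ℓ) n) (blockE b)) ∧
      r = ⨅ ℓ, mutInfo p (nCh (W ℓ) n) }

/-- The largest commonly deliverable energy:
`B_max = max_q min_ℓ Σ_{x,y} q(x) p_{Y(ℓ)|X}(y|x) b(y)`. -/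
def Bmax {𝓧 𝓨 : Type} [Fintype 𝓧] [Fintype 𝓨] {L : ℕ}
    (W : Fin L → 𝓧 → 𝓨 → ℝ) (b : 𝓨 → ℝ) : ℝ :=
  sSup { r | ∃ q : 𝓧 → ℝ, IsProbVec q ∧ r = ⨅ ℓ, outEnergy q (W ℓ) b }

namespace SL
set_option linter.unusedSectionVars false

variable {α β : Type} [Fintype α] [Fintype β]

/-- Sum over a pi type of a product factorizes. -/
lemma sum_pi_prod {n : ℕ} (g : Fin n → β → ℝ) :
    ∑ y : Fin n → β, ∏ j, g j (y j) = ∏ j, ∑ c, g j c := by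
  classical
  simpa [Fintype.piFinset_univ] using
    (Finset.prod_univ_sum (fun _ : Fin n => (Finset.univ : Finset β)) (fun j c => g j c)).symm

/-- Summing out all coordinates but one. -/
lemma sum_pi_single {n : ℕ} (g : Fin n → β → ℝ) (hg : ∀ j, ∑ c, g j c = 1)
    (i : Fin n) (φ : β → ℝ) :
    ∑ y : Fin n → β, (∏ j, g j (y j)) * φ (y i) = ∑ c, g i c * φ c := by
  classical
  have h1 : ∀ y : Fin n → β,
      (∏ j, g j (y j)) * φ (y i)
        = ∏ j, (g j (y j) * (if j = i then φ (y j) else 1)) := by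
    intro y
    rw [Finset.prod_mul_distrib]
    congr 1
    simp [Finset.prod_ite_eq']
  have h2 := sum_pi_prod (fun j c => g j c * (if j = i then φ c else 1)) (β := β)
  calc ∑ y : Fin n → β, (∏ j, g j (y j)) * φ (y i)
      = ∑ y : Fin n → β, ∏ j, (g j (y j) * (if j = i then φ (y j) else 1)) := by
        exact Finset.sum_congr rfl fun y _ => h1 y
    _ = ∏ j, ∑ c, g j c * (if j = i then φ c else 1) := h2
    _ = ∑ c, g i c * φ c := by
        rw [Finset.prod_eq_single i]
        · simp
        · intro j _ hj
          simp [hj, hg j]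
        · simp

open Classical in
/-- i-th marginal of a joint distribution on `Fin n → α`. -/
def marg {n : ℕ} (p : (Fin n → α) → ℝ) (i : Fin n) (a : α) : ℝ :=
  ∑ x : Fin n → α, if x i = a then p x else 0

lemma marg_nonneg {n : ℕ} {p : (Fin n → α) → ℝ} (hp : ∀ x, 0 ≤ p x) (i : Fin n) (a : α) :
    0 ≤ marg p i a := by
  classical
  refine Finset.sum_nonneg fun x _ => ?_
  split <;> simp [hp x]

lemma sum_marg {n : ℕ} (p : (Fin n → α) → ℝ) (i : Fin n) :
    ∑ a, marg p i a = ∑ x, p x := by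
  classical
  unfold marg
  rw [Finset.sum_comm]
  simp

lemma le_marg {n : ℕ} {p : (Fin n → α) → ℝ} (hp : ∀ x, 0 ≤ p x) (i : Fin n) (x : Fin n → α) :
    p x ≤ marg p i (x i) := by
  classical
  have := Finset.single_le_sum (f := fun x' : Fin n → α => if x' i = x i then p x' else 0)
    (fun x' _ => by split <;> simp [hp x']) (Finset.mem_univ x)
  simpa [marg] using this

/-- Average of the marginals. -/
def pbar {n : ℕ} (p : (Fin n → α) → ℝ) : α → ℝ := fun a => (n : ℝ)⁻¹ * ∑ i, marg p i a

lemma pbar_nonneg {n : ℕ} {p : (Fin n → α) → ℝ} (hp : ∀ x, 0 ≤ p x) (a : α) :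
    0 ≤ pbar p a := by
  refine mul_nonneg (by positivity) (Finset.sum_nonneg fun i _ => marg_nonneg hp i a)

lemma pbar_probVec {n : ℕ} (hn : 0 < n) {p : (Fin n → α) → ℝ} (hp : IsProbVec p) :
    IsProbVec (pbar p) := by
  refine ⟨pbar_nonneg hp.1, ?_⟩
  unfold pbar
  rw [← Finset.mul_sum, Finset.sum_comm]
  simp only [sum_marg, hp.2]
  simp only [Finset.sum_const, Finset.card_univ, Fintype.card_fin, smul_eq_mul, mul_one]
  field_simp
  simp

lemma sum_marg_eq_pbar {n : ℕ} (hn : 0 < n) (p : (Fin n → α) → ℝ) (a : α) :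
    ∑ i, marg p i a = (n : ℝ) * pbar p a := by
  unfold pbar
  have : (n : ℝ) ≠ 0 := Nat.cast_ne_zero.2 hn.ne'
  field_simp

lemma pbar_pos {n : ℕ} (hn : 0 < n) {p : (Fin n → α) → ℝ} (hp : ∀ x, 0 ≤ p x)
    {x : Fin n → α} (hx : 0 < p x) (i : Fin n) : 0 < pbar p (x i) := by
  have h1 : p x ≤ marg p i (x i) := le_marg hp i x
  have h2 : marg p i (x i) ≤ ∑ j, marg p j (x i) :=
    Finset.single_le_sum (fun j _ => marg_nonneg hp j (x i)) (Finset.mem_univ i)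
  have : (0 : ℝ) < (n : ℝ)⁻¹ := by positivity
  exact mul_pos this (lt_of_lt_of_le hx (h1.trans h2))

/-- Core identity: summing out all but the `i`-th coordinate through a memoryless channel. -/
lemma sum_coord {n : ℕ} (W : α → β → ℝ) (hWc : ∀ x, ∑ y, W x y = 1)
    (p : (Fin n → α) → ℝ) (φ : α → β → ℝ) (i : Fin n) :
    ∑ x : Fin n → α, ∑ y : Fin n → β, p x * nCh W n x y * φ (x i) (y i)
      = ∑ a, ∑ c, marg p i a * W a c * φ a c := by
  classical
  have hx : ∀ x : Fin n → α,
      ∑ y : Fin n → β, nCh W n x y * φ (x i) (y i) = ∑ c, W (x i) c * φ (x i) c := by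
    intro x
    simpa [nCh] using sum_pi_single (fun j => W (x j)) (fun j => hWc (x j)) i (φ (x i))
  calc ∑ x : Fin n → α, ∑ y : Fin n → β, p x * nCh W n x y * φ (x i) (y i)
      = ∑ x : Fin n → α, p x * ∑ c, W (x i) c * φ (x i) c := by
        refine Finset.sum_congr rfl fun x _ => ?_
        rw [← hx x, Finset.mul_sum]
        exact Finset.sum_congr rfl fun y _ => by ring
    _ = ∑ x : Fin n → α, ∑ a, (if x i = a then p x else 0) * ∑ c, W a c * φ a c := by
        refine Finset.sum_congr rfl fun x _ => ?_
        simp [ite_mul, Finset.sum_ite_eq]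
    _ = ∑ a, (∑ x : Fin n → α, if x i = a then p x else 0) * ∑ c, W a c * φ a c := by
        rw [Finset.sum_comm]
        exact Finset.sum_congr rfl fun a _ => by rw [Finset.sum_mul]
    _ = ∑ a, ∑ c, marg p i a * W a c * φ a c := by
        refine Finset.sum_congr rfl fun a _ => ?_
        rw [Finset.mul_sum]
        exact Finset.sum_congr rfl fun c _ => by rw [marg]; ring

lemma outEnergy_eq (q : α → ℝ) (W : α → β → ℝ) (b : β → ℝ) :
    outEnergy q W b = ∑ a, ∑ c, q a * W a c * b c := by
  unfold outEnergy outDist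
  simp only [Finset.sum_mul]
  exact Finset.sum_comm

lemma nCh_nonneg {n : ℕ} {W : α → β → ℝ} (hWc : IsChannel W) (x : Fin n → α) (y : Fin n → β) :
    0 ≤ nCh W n x y :=
  Finset.prod_nonneg fun i _ => (hWc (x i)).1 (y i)

lemma nCh_channel {n : ℕ} {W : α → β → ℝ} (hWc : IsChannel W) : IsChannel (nCh W n) := by
  intro x
  refine ⟨fun y => nCh_nonneg hWc x y, ?_⟩
  rw [show (∑ y : Fin n → β, nCh W n x y) = ∑ y : Fin n → β, ∏ j, W (x j) (y j) from rfl,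
    sum_pi_prod]
  exact Finset.prod_eq_one fun j _ => (hWc (x j)).2

lemma outDist_nonneg {q : α → ℝ} {W : α → β → ℝ} (hq : ∀ a, 0 ≤ q a)
    (hW : ∀ a c, 0 ≤ W a c) (c : β) : 0 ≤ outDist q W c :=
  Finset.sum_nonneg fun a _ => mul_nonneg (hq a) (hW a c)

lemma sum_outDist {q : α → ℝ} {W : α → β → ℝ} (hq : (∑ a, q a) = 1)
    (hWc : IsChannel W) : ∑ c, outDist q W c = 1 := by
  unfold outDist
  rw [Finset.sum_comm]
  calc ∑ a, ∑ c, q a * W a c = ∑ a, q a * ∑ c, W a c := by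
        exact Finset.sum_congr rfl fun a _ => (Finset.mul_sum _ _ _).symm
    _ = 1 := by
        simp only [fun a => (hWc a).2, mul_one]; exact hq

lemma outEnergy_nCh {n : ℕ} {W : α → β → ℝ} (hWc : IsChannel W)
    (p : (Fin n → α) → ℝ) (b : β → ℝ) :
    outEnergy p (nCh W n) (blockE b) = ∑ i, outEnergy (marg p i) W b := by
  classical
  calc outEnergy p (nCh W n) (blockE b)
      = ∑ y : Fin n → β, ∑ i, ∑ x : Fin n → α, p x * nCh W n x y * b (y i) := by
        unfold outEnergy outDist blockE
        refine Finset.sum_congr rfl fun y _ => ?_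
        rw [Finset.mul_sum]
        exact Finset.sum_congr rfl fun i _ => Finset.sum_mul _ _ _
    _ = ∑ i, ∑ y : Fin n → β, ∑ x : Fin n → α, p x * nCh W n x y * b (y i) :=
        Finset.sum_comm
    _ = ∑ i, ∑ x : Fin n → α, ∑ y : Fin n → β, p x * nCh W n x y * b (y i) := by
        exact Finset.sum_congr rfl fun i _ => Finset.sum_comm
    _ = ∑ i, ∑ a, ∑ c, marg p i a * W a c * b c := by
        exact Finset.sum_congr rfl fun i _ =>
          sum_coord W (fun x => (hWc x).2) p (fun _ c => b c) i
    _ = ∑ i, outEnergy (marg p i) W b := by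
        exact Finset.sum_congr rfl fun i _ => (outEnergy_eq _ _ _).symm

lemma sum_outEnergy_marg {n : ℕ} (hn : 0 < n) (p : (Fin n → α) → ℝ)
    (W : α → β → ℝ) (b : β → ℝ) :
    ∑ i, outEnergy (marg p i) W b = (n : ℝ) * outEnergy (pbar p) W b := by
  simp only [outEnergy_eq]
  rw [Finset.mul_sum]
  rw [Finset.sum_comm]
  refine Finset.sum_congr rfl fun a _ => ?_
  rw [Finset.mul_sum, Finset.sum_comm]
  refine Finset.sum_congr rfl fun c _ => ?_
  rw [← Finset.sum_mul, ← Finset.sum_mul, sum_marg_eq_pbar hn]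
  ring

lemma outEnergy_nCh_pbar {n : ℕ} (hn : 0 < n) {W : α → β → ℝ} (hWc : IsChannel W)
    (p : (Fin n → α) → ℝ) (b : β → ℝ) :
    outEnergy p (nCh W n) (blockE b) = (n : ℝ) * outEnergy (pbar p) W b := by
  rw [outEnergy_nCh hWc, sum_outEnergy_marg hn]

/-- The product (i.i.d.) distribution. -/
def prodVec (q : α → ℝ) (n : ℕ) : (Fin n → α) → ℝ := fun x => ∏ i, q (x i)

lemma prodVec_probVec {q : α → ℝ} (hq : IsProbVec q) (n : ℕ) : IsProbVec (prodVec q n) := by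
  constructor
  · intro x; exact Finset.prod_nonneg fun i _ => hq.1 (x i)
  · rw [show (∑ x : Fin n → α, prodVec q n x) = ∑ x : Fin n → α, ∏ j, q (x j) from rfl,
      sum_pi_prod]
    exact Finset.prod_eq_one fun j _ => hq.2

lemma marg_prodVec {q : α → ℝ} (hq : IsProbVec q) {n : ℕ} (i : Fin n) (a : α) :
    marg (prodVec q n) i a = q a := by
  classical
  unfold marg prodVec
  have h := sum_pi_single (fun _ : Fin n => q) (fun _ => hq.2) i
    (fun c => if c = a then 1 else 0)
  calc (∑ x : Fin n → α, if x i = a then ∏ j, q (x j) else 0)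
      = ∑ x : Fin n → α, (∏ j, q (x j)) * (if x i = a then 1 else 0) := by
        refine Finset.sum_congr rfl fun x _ => ?_
        split <;> simp
    _ = ∑ c, q c * (if c = a then 1 else 0) := h
    _ = q a := by simp

lemma outDist_prodVec (q : α → ℝ) (W : α → β → ℝ) {n : ℕ} (y : Fin n → β) :
    outDist (prodVec q n) (nCh W n) y = ∏ i, outDist q W (y i) := by
  unfold outDist prodVec nCh
  calc (∑ x : Fin n → α, (∏ j, q (x j)) * ∏ j, W (x j) (y j))
      = ∑ x : Fin n → α, ∏ j, (q (x j) * W (x j) (y j)) := by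
        exact Finset.sum_congr rfl fun x _ => (Finset.prod_mul_distrib).symm
    _ = ∏ j, ∑ a, q a * W a (y j) := sum_pi_prod (fun j a => q a * W a (y j))

lemma pos_pos {a b : ℝ} (ha : 0 ≤ a) (hb : 0 ≤ b) (h : 0 < a * b) : 0 < a ∧ 0 < b := by
  constructor
  · rcases ha.lt_or_eq with h' | h'
    · exact h'
    · exfalso; rw [← h'] at h; simp at h
  · rcases hb.lt_or_eq with h' | h'
    · exact h'
    · exfalso; rw [← h'] at h; simp at h

lemma mutInfo_le_card {q : α → ℝ} {W : α → β → ℝ} (hq : IsProbVec q) (hWc : IsChannel W) :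
    mutInfo q W ≤ (Fintype.card α : ℝ) := by
  unfold mutInfo
  have hstep : ∀ x, ∑ y, q x * W x y * Real.log (W x y / outDist q W y) ≤ 1 := by
    intro x
    have h1 : ∀ y, q x * W x y * Real.log (W x y / outDist q W y)
        ≤ q x * W x y * (-Real.log (q x)) := by
      intro y
      rcases (mul_nonneg (hq.1 x) ((hWc x).1 y)).lt_or_eq with hpos | h0
      · obtain ⟨hqx, hWxy⟩ := pos_pos (hq.1 x) ((hWc x).1 y) hpos
        have hout_ge : q x * W x y ≤ outDist q W y :=
          Finset.single_le_sum (fun a _ => mul_nonneg (hq.1 a) ((hWc a).1 y))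
            (Finset.mem_univ x)
        have houtpos : (0 : ℝ) < outDist q W y := lt_of_lt_of_le hpos hout_ge
        have hle : W x y / outDist q W y ≤ (q x)⁻¹ := by
          rw [div_le_iff₀ houtpos]
          calc W x y = (q x)⁻¹ * (q x * W x y) := by field_simp
            _ ≤ (q x)⁻¹ * outDist q W y :=
                mul_le_mul_of_nonneg_left hout_ge (by positivity)
        have hlog : Real.log (W x y / outDist q W y) ≤ -Real.log (q x) := by
          rw [← Real.log_inv]
          exact Real.log_le_log (by positivity) hle
        exact mul_le_mul_of_nonneg_left hlog hpos.le
      · rw [← h0]; simp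
    calc ∑ y, q x * W x y * Real.log (W x y / outDist q W y)
        ≤ ∑ y, q x * W x y * (-Real.log (q x)) := Finset.sum_le_sum fun y _ => h1 y
      _ = (∑ y, W x y) * (q x * (-Real.log (q x))) := by
          rw [Finset.sum_mul]
          exact Finset.sum_congr rfl fun y _ => by ring
      _ = q x * (-Real.log (q x)) := by rw [(hWc x).2, one_mul]
      _ ≤ 1 := by
          rcases (hq.1 x).lt_or_eq with hqx | hqx
          · have := Real.log_le_sub_one_of_pos (show (0:ℝ) < (q x)⁻¹ by positivity)
            rw [Real.log_inv] at this
            nlinarith [mul_le_mul_of_nonneg_left this hqx.le,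
              mul_inv_cancel₀ (ne_of_gt hqx)]
          · rw [← hqx]; norm_num
  calc (∑ x, ∑ y, q x * W x y * Real.log (W x y / outDist q W y))
      ≤ ∑ x : α, (1 : ℝ) := Finset.sum_le_sum fun x _ => hstep x
    _ = (Fintype.card α : ℝ) := by simp

lemma outDist_pos_of {q : α → ℝ} {W : α → β → ℝ} (hq : ∀ a, 0 ≤ q a)
    (hW : ∀ a c, 0 ≤ W a c) {x : α} {y : β} (hx : 0 < q x) (hxy : 0 < W x y) :
    0 < outDist q W y := by
  have : q x * W x y ≤ outDist q W y :=
    Finset.single_le_sum (fun a _ => mul_nonneg (hq a) (hW a y)) (Finset.mem_univ x)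
  exact lt_of_lt_of_le (mul_pos hx hxy) this

lemma prod_pos_of_pos {n : ℕ} {f : Fin n → ℝ} (h0 : ∀ i, 0 ≤ f i) (h : 0 < ∏ i, f i)
    (i : Fin n) : 0 < f i := by
  rcases (h0 i).lt_or_eq with h' | h'
  · exact h'
  · exfalso
    have : (∏ j, f j) = 0 := Finset.prod_eq_zero (Finset.mem_univ i) h'.symm
    rw [this] at h; exact lt_irrefl 0 h

/-- Direct part: the product input exactly single-letterizes mutual information. -/
lemma mutInfo_prodVec {q : α → ℝ} {W : α → β → ℝ} (hq : IsProbVec q) (hWc : IsChannel W)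
    (n : ℕ) : mutInfo (prodVec q n) (nCh W n) = (n : ℝ) * mutInfo q W := by
  classical
  set r : β → ℝ := outDist q W with hr
  have hr0 : ∀ c, 0 ≤ r c := fun c => outDist_nonneg hq.1 (fun a c' => (hWc a).1 c') c
  have key : ∀ (x : Fin n → α) (y : Fin n → β),
      prodVec q n x * nCh W n x y
          * Real.log (nCh W n x y / outDist (prodVec q n) (nCh W n) y)
        = ∑ i, prodVec q n x * nCh W n x y * Real.log (W (x i) (y i) / r (y i)) := by
    intro x y
    rcases (mul_nonneg ((prodVec_probVec hq n).1 x) (nCh_nonneg hWc x y)).lt_or_eq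
      with hpos | h0
    · obtain ⟨hP, hN⟩ :=
        pos_pos ((prodVec_probVec hq n).1 x) (nCh_nonneg hWc x y) hpos
      have hqi : ∀ i, 0 < q (x i) := prod_pos_of_pos (fun i => hq.1 (x i)) hP
      have hWi : ∀ i, 0 < W (x i) (y i) :=
        prod_pos_of_pos (fun i => (hWc (x i)).1 (y i)) hN
      have hri : ∀ i, 0 < r (y i) := fun i =>
        outDist_pos_of hq.1 (fun a c' => (hWc a).1 c') (hqi i) (hWi i)
      have hlog : Real.log (nCh W n x y / outDist (prodVec q n) (nCh W n) y)
          = ∑ i, Real.log (W (x i) (y i) / r (y i)) := by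
        rw [outDist_prodVec]
        rw [show nCh W n x y / ∏ i, r (y i) = ∏ i, (W (x i) (y i) / r (y i)) by
          rw [nCh, Finset.prod_div_distrib]]
        exact Real.log_prod fun i _ =>
          div_ne_zero (hWi i).ne' (hri i).ne'
      rw [hlog, Finset.mul_sum]
    · rw [← h0]; simp
  calc mutInfo (prodVec q n) (nCh W n)
      = ∑ x : Fin n → α, ∑ y : Fin n → β,
          ∑ i, prodVec q n x * nCh W n x y * Real.log (W (x i) (y i) / r (y i)) := by
        unfold mutInfo
        exact Finset.sum_congr rfl fun x _ => Finset.sum_congr rfl fun y _ => key x y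
    _ = ∑ i, ∑ x : Fin n → α, ∑ y : Fin n → β,
          prodVec q n x * nCh W n x y * Real.log (W (x i) (y i) / r (y i)) := by
        rw [show (∑ x : Fin n → α, ∑ y : Fin n → β, ∑ i, prodVec q n x * nCh W n x y
            * Real.log (W (x i) (y i) / r (y i)))
          = ∑ x : Fin n → α, ∑ i, ∑ y : Fin n → β, prodVec q n x * nCh W n x y
            * Real.log (W (x i) (y i) / r (y i)) from
          Finset.sum_congr rfl fun x _ => Finset.sum_comm]
        exact Finset.sum_comm
    _ = ∑ i : Fin n, ∑ a, ∑ c, marg (prodVec q n) i a * W a c * Real.log (W a c / r c) :=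
        Finset.sum_congr rfl fun i _ =>
          sum_coord W (fun a => (hWc a).2) (prodVec q n)
            (fun a c => Real.log (W a c / r c)) i
    _ = ∑ i : Fin n, mutInfo q W := by
        refine Finset.sum_congr rfl fun i _ => ?_
        unfold mutInfo
        exact Finset.sum_congr rfl fun a _ => Finset.sum_congr rfl fun c _ => by
          rw [marg_prodVec hq]
    _ = (n : ℝ) * mutInfo q W := by simp

lemma sum_marg_bilin {n : ℕ} (hn : 0 < n) (p : (Fin n → α) → ℝ) (K : α → β → ℝ) :
    ∑ i, ∑ a, ∑ c, marg p i a * K a c = (n : ℝ) * ∑ a, ∑ c, pbar p a * K a c := by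
  rw [Finset.mul_sum, Finset.sum_comm]
  refine Finset.sum_congr rfl fun a _ => ?_
  rw [Finset.mul_sum, Finset.sum_comm]
  refine Finset.sum_congr rfl fun c _ => ?_
  rw [← Finset.sum_mul, sum_marg_eq_pbar hn]
  ring

/-- Converse part: over a memoryless channel, `n`-letter mutual information is at most
`n` times the single-letter mutual information of the averaged marginal. -/
lemma mutInfo_nCh_le {n : ℕ} (hn : 0 < n) {p : (Fin n → α) → ℝ} {W : α → β → ℝ}
    (hp : IsProbVec p) (hWc : IsChannel W) :
    mutInfo p (nCh W n) ≤ (n : ℝ) * mutInfo (pbar p) W := by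
  classical
  set qb : α → ℝ := pbar p with hqbdef
  have hqb : IsProbVec qb := pbar_probVec hn hp
  set r : β → ℝ := outDist qb W with hrdef
  have hr0 : ∀ c, 0 ≤ r c := fun c => outDist_nonneg hqb.1 (fun a c' => (hWc a).1 c') c
  set R : (Fin n → β) → ℝ := fun y => ∏ i, r (y i) with hRdef
  have hR0 : ∀ y, 0 ≤ R y := fun y => Finset.prod_nonneg fun i _ => hr0 (y i)
  set Q : (Fin n → β) → ℝ := outDist p (nCh W n) with hQdef
  have hw0 : ∀ (x : Fin n → α) (y : Fin n → β), 0 ≤ p x * nCh W n x y := fun x y =>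
    mul_nonneg (hp.1 x) (nCh_nonneg hWc x y)
  have hQ0 : ∀ y, 0 ≤ Q y := fun y => Finset.sum_nonneg fun x _ => hw0 x y
  have hwQ : ∀ (x : Fin n → α) (y : Fin n → β), p x * nCh W n x y ≤ Q y := fun x y =>
    Finset.single_le_sum (fun x' _ => hw0 x' y) (Finset.mem_univ x)
  have hrpos : ∀ (x : Fin n → α) (y : Fin n → β), 0 < p x * nCh W n x y →
      ∀ i, 0 < r (y i) := by
    intro x y hpos i
    obtain ⟨hpx, hN⟩ := pos_pos (hp.1 x) (nCh_nonneg hWc x y) hpos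
    have hWi : 0 < W (x i) (y i) := prod_pos_of_pos (fun j => (hWc (x j)).1 (y j)) hN i
    exact outDist_pos_of hqb.1 (fun a c' => (hWc a).1 c') (pbar_pos hn hp.1 hpx i) hWi
  have key : ∀ (x : Fin n → α) (y : Fin n → β),
      p x * nCh W n x y * Real.log (nCh W n x y / Q y)
        = (∑ i, p x * nCh W n x y * Real.log (W (x i) (y i) / r (y i)))
          + p x * nCh W n x y * (Real.log (R y) - Real.log (Q y)) := by
    intro x y
    rcases (hw0 x y).lt_or_eq with hpos | h0
    · obtain ⟨hpx, hN⟩ := pos_pos (hp.1 x) (nCh_nonneg hWc x y) hpos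
      have hWi : ∀ i, 0 < W (x i) (y i) :=
        prod_pos_of_pos (fun j => (hWc (x j)).1 (y j)) hN
      have hri : ∀ i, 0 < r (y i) := hrpos x y hpos
      have hQy : 0 < Q y := lt_of_lt_of_le hpos (hwQ x y)
      have hRy : 0 < R y := Finset.prod_pos fun i _ => hri i
      have hscal : Real.log (nCh W n x y / Q y)
          = (∑ i, Real.log (W (x i) (y i) / r (y i)))
            + (Real.log (R y) - Real.log (Q y)) := by
        have e1 : Real.log (nCh W n x y) = ∑ i, Real.log (W (x i) (y i)) :=
          Real.log_prod fun i _ => (hWi i).ne'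
        have e2 : Real.log (R y) = ∑ i, Real.log (r (y i)) :=
          Real.log_prod fun i _ => (hri i).ne'
        have e3 : ∀ i, Real.log (W (x i) (y i) / r (y i))
            = Real.log (W (x i) (y i)) - Real.log (r (y i)) := fun i =>
          Real.log_div (hWi i).ne' (hri i).ne'
        rw [Real.log_div hN.ne' hQy.ne', e1, e2]
        rw [Finset.sum_congr rfl fun i _ => e3 i, Finset.sum_sub_distrib]
        ring
      rw [hscal, mul_add, Finset.mul_sum]
    · rw [← h0]; simp
  have hA : ∑ x : Fin n → α, ∑ y : Fin n → β,
      ∑ i, p x * nCh W n x y * Real.log (W (x i) (y i) / r (y i))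
        = (n : ℝ) * mutInfo qb W := by
    calc ∑ x : Fin n → α, ∑ y : Fin n → β,
        ∑ i, p x * nCh W n x y * Real.log (W (x i) (y i) / r (y i))
        = ∑ i, ∑ x : Fin n → α, ∑ y : Fin n → β,
            p x * nCh W n x y * Real.log (W (x i) (y i) / r (y i)) := by
          rw [show (∑ x : Fin n → α, ∑ y : Fin n → β, ∑ i, p x * nCh W n x y
              * Real.log (W (x i) (y i) / r (y i)))
            = ∑ x : Fin n → α, ∑ i, ∑ y : Fin n → β, p x * nCh W n x y
              * Real.log (W (x i) (y i) / r (y i)) from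
            Finset.sum_congr rfl fun x _ => Finset.sum_comm]
          exact Finset.sum_comm
      _ = ∑ i : Fin n, ∑ a, ∑ c, marg p i a * W a c * Real.log (W a c / r c) :=
          Finset.sum_congr rfl fun i _ =>
            sum_coord W (fun a => (hWc a).2) p (fun a c => Real.log (W a c / r c)) i
      _ = ∑ i : Fin n, ∑ a, ∑ c, marg p i a * (W a c * Real.log (W a c / r c)) := by
          exact Finset.sum_congr rfl fun i _ => Finset.sum_congr rfl fun a _ =>
            Finset.sum_congr rfl fun c _ => by ring
      _ = (n : ℝ) * ∑ a, ∑ c, pbar p a * (W a c * Real.log (W a c / r c)) :=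
          sum_marg_bilin hn p _
      _ = (n : ℝ) * mutInfo qb W := by
          unfold mutInfo
          congr 1
          exact Finset.sum_congr rfl fun a _ => Finset.sum_congr rfl fun c _ => by
            rw [← hrdef, ← hqbdef]; ring
  have hT : ∑ y : Fin n → β, Q y * (Real.log (R y) - Real.log (Q y)) ≤ 0 := by
    have hy : ∀ y : Fin n → β, Q y * (Real.log (R y) - Real.log (Q y)) ≤ R y - Q y := by
      intro y
      rcases (hQ0 y).lt_or_eq with hQy | hQy
      · have hRy : 0 < R y := by
          have hne : Q y ≠ 0 := hQy.ne'
          have hsum : (∑ x : Fin n → α, p x * nCh W n x y) ≠ 0 := hne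
          obtain ⟨x, _, hx⟩ := Finset.exists_ne_zero_of_sum_ne_zero hsum
          have hxpos : 0 < p x * nCh W n x y := (hw0 x y).lt_of_ne (Ne.symm hx)
          exact Finset.prod_pos fun i _ => hrpos x y hxpos i
        have h1 : Real.log (R y) - Real.log (Q y) = Real.log (R y / Q y) :=
          (Real.log_div hRy.ne' hQy.ne').symm
        have h2 : Real.log (R y / Q y) ≤ R y / Q y - 1 :=
          Real.log_le_sub_one_of_pos (div_pos hRy hQy)
        calc Q y * (Real.log (R y) - Real.log (Q y))
            = Q y * Real.log (R y / Q y) := by rw [h1]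
          _ ≤ Q y * (R y / Q y - 1) := mul_le_mul_of_nonneg_left h2 hQy.le
          _ = R y - Q y := by field_simp
      · rw [← hQy]; simpa using hR0 y
    calc ∑ y : Fin n → β, Q y * (Real.log (R y) - Real.log (Q y))
        ≤ ∑ y : Fin n → β, (R y - Q y) := Finset.sum_le_sum fun y _ => hy y
      _ = 0 := by
          rw [Finset.sum_sub_distrib]
          have h1 : ∑ y : Fin n → β, R y = 1 := by
            rw [hRdef]
            rw [sum_pi_prod (fun _ c => r c)]
            exact Finset.prod_eq_one fun j _ => sum_outDist hqb.2 hWc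
          have h2 : ∑ y : Fin n → β, Q y = 1 := sum_outDist hp.2 (nCh_channel hWc)
          rw [h1, h2, sub_self]
  calc mutInfo p (nCh W n)
      = ∑ x : Fin n → α, ∑ y : Fin n → β,
          ((∑ i, p x * nCh W n x y * Real.log (W (x i) (y i) / r (y i)))
            + p x * nCh W n x y * (Real.log (R y) - Real.log (Q y))) := by
        unfold mutInfo
        exact Finset.sum_congr rfl fun x _ => Finset.sum_congr rfl fun y _ => key x y
    _ = (∑ x : Fin n → α, ∑ y : Fin n → β,
          ∑ i, p x * nCh W n x y * Real.log (W (x i) (y i) / r (y i)))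
        + ∑ x : Fin n → α, ∑ y : Fin n → β,
            p x * nCh W n x y * (Real.log (R y) - Real.log (Q y)) := by
        rw [Finset.sum_congr rfl fun (x : Fin n → α) (_ : x ∈ Finset.univ) =>
          Finset.sum_add_distrib, Finset.sum_add_distrib]
    _ = (∑ x : Fin n → α, ∑ y : Fin n → β,
          ∑ i, p x * nCh W n x y * Real.log (W (x i) (y i) / r (y i)))
        + ∑ y : Fin n → β, Q y * (Real.log (R y) - Real.log (Q y)) := by
        congr 1
        rw [Finset.sum_comm]
        exact Finset.sum_congr rfl fun y _ => (Finset.sum_mul _ _ _).symm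
    _ ≤ (n : ℝ) * mutInfo qb W + 0 := by
        exact add_le_add (le_of_eq hA) hT
    _ = (n : ℝ) * mutInfo (pbar p) W := by rw [add_zero, hqbdef]


variable {α β : Type} [Fintype α] [Fintype β]

lemma exists_opt {L : ℕ} (hL : 0 < L) [Nonempty α] (W : Fin L → α → β → ℝ)
    (b : β → ℝ) (B : ℝ) (hB : B ≤ Bmax W b) :
    ∃ q : α → ℝ, IsProbVec q ∧ ∀ ℓ, B ≤ outEnergy q (W ℓ) b := by
  classical
  haveI : Nonempty (Fin L) := ⟨⟨0, hL⟩⟩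
  have hcard : (0:ℝ) < (Fintype.card α : ℝ) := by exact_mod_cast Fintype.card_pos
  let u : α → ℝ := fun _ => (Fintype.card α : ℝ)⁻¹
  have hu : IsProbVec u := by
    refine ⟨fun a => by positivity, ?_⟩
    simp only [u, Finset.sum_const, Finset.card_univ, nsmul_eq_mul]
    field_simp
  have huS : u ∈ stdSimplex ℝ α := ⟨hu.1, hu.2⟩
  have hcont : ∀ ℓ : Fin L, Continuous fun q : α → ℝ => outEnergy q (W ℓ) b := by
    intro ℓ
    unfold outEnergy outDist
    exact continuous_finset_sum _ fun y _ => ((continuous_finset_sum _ fun x _ =>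
      ((continuous_apply x).mul continuous_const)).mul continuous_const)
  have hcont2 : Continuous fun q : α → ℝ => ⨅ ℓ, outEnergy q (W ℓ) b := by
    have heq : (fun q : α → ℝ => ⨅ ℓ, outEnergy q (W ℓ) b)
        = fun q => Finset.univ.inf' Finset.univ_nonempty (fun ℓ => outEnergy q (W ℓ) b) := by
      funext q; rw [Finset.inf'_univ_eq_ciInf]
    rw [heq, continuous_iff_continuousAt]
    intro q
    exact ContinuousAt.finset_inf'_apply Finset.univ_nonempty fun ℓ _ => (hcont ℓ).continuousAt
  obtain ⟨q0, hq0S, hmax⟩ := (isCompact_stdSimplex ℝ α).exists_isMaxOn ⟨u, huS⟩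
    hcont2.continuousOn
  refine ⟨q0, ⟨hq0S.1, hq0S.2⟩, fun ℓ => ?_⟩
  have h1 : Bmax W b ≤ ⨅ ℓ, outEnergy q0 (W ℓ) b := by
    refine csSup_le ⟨⨅ ℓ, outEnergy u (W ℓ) b, u, hu, rfl⟩ ?_
    rintro x ⟨q, hq, rfl⟩
    exact isMaxOn_iff.1 hmax q ⟨hq.1, hq.2⟩
  exact hB.trans (h1.trans (ciInf_le (Finite.bddBelow_range _) ℓ))

lemma CnEq_eq {𝓧 𝓨 : Type} [Fintype 𝓧] [Fintype 𝓨] [Nonempty 𝓧] {L : ℕ} (hL : 0 < L)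
    (W : Fin L → 𝓧 → 𝓨 → ℝ) (hW : ∀ ℓ, IsChannel (W ℓ)) (b : 𝓨 → ℝ)
    (B : ℝ) (hB : B ≤ Bmax W b) (n : ℕ) (hn : 0 < n) :
    CnEq W b B n = (n : ℝ) * sSup {r | ∃ q : 𝓧 → ℝ, IsProbVec q ∧
      (∀ ℓ, B ≤ outEnergy q (W ℓ) b) ∧ r = ⨅ ℓ, mutInfo q (W ℓ)} := by
  classical
  haveI : Nonempty (Fin L) := ⟨⟨0, hL⟩⟩
  set D : Set ℝ := {r | ∃ q : 𝓧 → ℝ, IsProbVec q ∧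
      (∀ ℓ, B ≤ outEnergy q (W ℓ) b) ∧ r = ⨅ ℓ, mutInfo q (W ℓ)} with hD
  set C : Set ℝ := { r | ∃ p : (Fin n → 𝓧) → ℝ, IsProbVec p ∧
      (∀ ℓ, (n : ℝ) * B ≤ outEnergy p (nCh (W ℓ) n) (blockE b)) ∧
      r = ⨅ ℓ, mutInfo p (nCh (W ℓ) n) } with hC
  have hCnEq : CnEq W b B n = sSup C := rfl
  obtain ⟨q0, hq0, hq0E⟩ := exists_opt hL W b B hB
  have hDne : D.Nonempty := ⟨_, q0, hq0, hq0E, rfl⟩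
  have hDbdd : BddAbove D := by
    refine ⟨(Fintype.card 𝓧 : ℝ), ?_⟩
    rintro x ⟨q, hq, hqE, rfl⟩
    exact le_trans (ciInf_le (Finite.bddBelow_range _) ⟨0, hL⟩) (mutInfo_le_card hq (hW _))
  have hCbdd : BddAbove C := by
    refine ⟨(Fintype.card (Fin n → 𝓧) : ℝ), ?_⟩
    rintro x ⟨p, hp, hpE, rfl⟩
    exact le_trans (ciInf_le (Finite.bddBelow_range _) ⟨0, hL⟩)
      (mutInfo_le_card hp (nCh_channel (hW _)))
  have hmemC : ∀ q : 𝓧 → ℝ, IsProbVec q → (∀ ℓ, B ≤ outEnergy q (W ℓ) b) →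
      ((n : ℝ) * ⨅ ℓ, mutInfo q (W ℓ)) ∈ C := by
    intro q hq hqE
    refine ⟨prodVec q n, prodVec_probVec hq n, fun ℓ => ?_, ?_⟩
    · rw [outEnergy_nCh (hW ℓ)]
      have hmg : ∀ i : Fin n, outEnergy (marg (prodVec q n) i) (W ℓ) b
          = outEnergy q (W ℓ) b := by
        intro i
        rw [show marg (prodVec q n) i = q from funext (marg_prodVec hq i)]
      calc (n : ℝ) * B ≤ (n : ℝ) * outEnergy q (W ℓ) b :=
            mul_le_mul_of_nonneg_left (hqE ℓ) (Nat.cast_nonneg n)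
        _ = ∑ _i : Fin n, outEnergy q (W ℓ) b := by
            simp [Finset.sum_const, Finset.card_univ, nsmul_eq_mul]
        _ = ∑ i : Fin n, outEnergy (marg (prodVec q n) i) (W ℓ) b :=
            (Finset.sum_congr rfl fun i _ => (hmg i).symm)
    · rw [Real.mul_iInf_of_nonneg (Nat.cast_nonneg n)]
      exact iInf_congr fun ℓ => (mutInfo_prodVec hq (hW ℓ) n).symm
  have hCne : C.Nonempty := ⟨_, hmemC q0 hq0 hq0E⟩
  rw [hCnEq]
  apply le_antisymm
  · refine csSup_le hCne ?_
    rintro x ⟨p, hp, hpE, rfl⟩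
    have hqb : IsProbVec (pbar p) := pbar_probVec hn hp
    have hnpos : (0:ℝ) < n := by exact_mod_cast hn
    have hqbE : ∀ ℓ, B ≤ outEnergy (pbar p) (W ℓ) b := by
      intro ℓ
      have h1 := hpE ℓ
      rw [outEnergy_nCh_pbar hn (hW ℓ)] at h1
      exact le_of_mul_le_mul_left h1 hnpos
    have hle : (⨅ ℓ, mutInfo p (nCh (W ℓ) n)) ≤ (n : ℝ) * ⨅ ℓ, mutInfo (pbar p) (W ℓ) := by
      rw [Real.mul_iInf_of_nonneg (Nat.cast_nonneg n)]
      exact ciInf_mono (Finite.bddBelow_range _) fun ℓ => mutInfo_nCh_le hn hp (hW ℓ)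
    refine hle.trans ?_
    exact mul_le_mul_of_nonneg_left (le_csSup hDbdd ⟨pbar p, hqb, hqbE, rfl⟩)
      (Nat.cast_nonneg n)
  · have hnpos : (0:ℝ) < n := by exact_mod_cast hn
    have h1 : sSup D ≤ sSup C / n := by
      refine csSup_le hDne ?_
      rintro x ⟨q, hq, hqE, rfl⟩
      rw [le_div_iff₀ hnpos]
      have h2 := le_csSup hCbdd (hmemC q hq hqE)
      linarith
    calc (n : ℝ) * sSup D ≤ (n : ℝ) * (sSup C / n) :=
          mul_le_mul_of_nonneg_left h1 (Nat.cast_nonneg n)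
      _ = sSup C := by field_simp

end SL

/-- **Single-letterization of the `n`-th multicast capacity-energy function** (Theorem 3):
for any multicast DMC, any `n ∈ ℤ⁺` and any `0 ≤ B ≤ B_max`, `C_n(B) = n · C_1(B)`. -/

theorem CnEq_single_letter
    {𝓧 𝓨 : Type} [Fintype 𝓧] [Fintype 𝓨] [Nonempty 𝓧] {L : ℕ} (hL : 0 < L)
    (W : Fin L → 𝓧 → 𝓨 → ℝ) (hW : ∀ ℓ, IsChannel (W ℓ))
    (b : 𝓨 → ℝ) (hb : ∀ y, 0 ≤ b y)
    (n : ℕ) (hn : 0 < n) (B : ℝ)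
    (hB0 : 0 ≤ B) (hB : B ≤ Bmax W b) :
    CnEq W b B n = n * CnEq W b B 1 := by
  have h1 := SL.CnEq_eq hL W hW b B hB 1 one_pos
  have h2 := SL.CnEq_eq hL W hW b B hB n hn
  rw [h2, h1]
  push_cast
  ring

end
end

section
/- For any multicast discrete memoryless channel and any B with 0 ≤ B ≤ B_max, the multicast capacity-energy function equals its single-letter version: C(B) = sup_{n ≥ 1} (1/n)·C_n(B) = C_1(B). -/
open scoped BigOperators

noncomputable section

/-- The multicast capacity-energy function `C(B) = sup_{n ≥ 1} C_n(B)/n`. -/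
def CcapEq {𝓧 𝓨 : Type} [Fintype 𝓧] [Fintype 𝓨] {L : ℕ}
    (W : Fin L → 𝓧 → 𝓨 → ℝ) (b : 𝓨 → ℝ) (B : ℝ) : ℝ :=
  ⨆ n : ℕ+, CnEq W b B n / (n : ℝ)

section AuxIT

variable {𝓧 𝓨 : Type} [Fintype 𝓧] [Fintype 𝓨]

lemma sum_pi_prod {n : ℕ} (f : Fin n → 𝓨 → ℝ) :
    ∑ y : Fin n → 𝓨, ∏ i, f i (y i) = ∏ i, ∑ c, f i c :=
  (Fintype.prod_sum f).symm

lemma nCh_nonneg {n : ℕ} {W : 𝓧 → 𝓨 → ℝ} (hW : IsChannel W) (x : Fin n → 𝓧)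
    (y : Fin n → 𝓨) : 0 ≤ nCh W n x y :=
  Finset.prod_nonneg fun i _ => (hW _).1 _

lemma nCh_rowsum {n : ℕ} {W : 𝓧 → 𝓨 → ℝ} (hW : IsChannel W) (x : Fin n → 𝓧) :
    ∑ y, nCh W n x y = 1 := by
  unfold nCh
  rw [sum_pi_prod]
  simp [(hW _).2]

lemma sum_coord {n : ℕ} (R : Fin n → 𝓨 → ℝ) (h1 : ∀ j, ∑ c, R j c = 1)
    (i : Fin n) (g : 𝓨 → ℝ) :
    ∑ y : Fin n → 𝓨, (∏ j, R j (y j)) * g (y i) = ∑ c, R i c * g c := by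
  classical
  have step1 : ∀ y : Fin n → 𝓨,
      (∏ j, R j (y j)) * g (y i) = ∏ j, (R j (y j) * (if j = i then g (y j) else 1)) := by
    intro y
    rw [Finset.prod_mul_distrib, Finset.prod_ite_eq' Finset.univ i fun j => g (y j)]
    simp
  calc ∑ y : Fin n → 𝓨, (∏ j, R j (y j)) * g (y i)
      = ∑ y : Fin n → 𝓨, ∏ j, (R j (y j) * (if j = i then g (y j) else 1)) :=
        Finset.sum_congr rfl fun y _ => step1 y
    _ = ∏ j, ∑ c, (R j c * (if j = i then g c else 1)) :=
        sum_pi_prod (fun j c => R j c * (if j = i then g c else 1))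
    _ = ∏ j, (if j = i then (∑ c, R i c * g c) else 1) := by
        refine Finset.prod_congr rfl fun j _ => ?_
        by_cases h : j = i
        · subst h; simp
        · simp [h, h1 j]
    _ = ∑ c, R i c * g c := by
        rw [Finset.prod_ite_eq' Finset.univ i fun _ => (∑ c, R i c * g c)]
        simp

variable [DecidableEq 𝓧]

/-- `i`-th marginal of an `n`-letter distribution. -/
def margA {n : ℕ} (p : (Fin n → 𝓧) → ℝ) (i : Fin n) (a : 𝓧) : ℝ :=
  ∑ x, if x i = a then p x else 0

/-- Average of the marginals. -/
def avgM {n : ℕ} (p : (Fin n → 𝓧) → ℝ) (a : 𝓧) : ℝ :=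
  (∑ i, margA p i a) / n

lemma sum_margA_mul {n : ℕ} (p : (Fin n → 𝓧) → ℝ) (i : Fin n) (F : 𝓧 → ℝ) :
    ∑ a, margA p i a * F a = ∑ x, p x * F (x i) := by
  unfold margA
  calc ∑ a, (∑ x, if x i = a then p x else 0) * F a
      = ∑ a, ∑ x, (if x i = a then p x * F a else 0) := by
        refine Finset.sum_congr rfl fun a _ => ?_
        rw [Finset.sum_mul]
        exact Finset.sum_congr rfl fun x _ => by split <;> simp
    _ = ∑ x, ∑ a, (if x i = a then p x * F a else 0) := Finset.sum_comm
    _ = ∑ x, p x * F (x i) := by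
        refine Finset.sum_congr rfl fun x _ => ?_
        simp

lemma margA_nonneg {n : ℕ} {p : (Fin n → 𝓧) → ℝ} (hp : ∀ x, 0 ≤ p x) (i : Fin n) (a : 𝓧) :
    0 ≤ margA p i a :=
  Finset.sum_nonneg fun x _ => by split <;> simp [hp x]

lemma sum_margA {n : ℕ} (p : (Fin n → 𝓧) → ℝ) (i : Fin n) :
    ∑ a, margA p i a = ∑ x, p x := by
  have := sum_margA_mul p i (fun _ => 1)
  simpa using this

lemma le_margA {n : ℕ} {p : (Fin n → 𝓧) → ℝ} (hp : ∀ x, 0 ≤ p x) (i : Fin n)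
    (x : Fin n → 𝓧) : p x ≤ margA p i (x i) := by
  unfold margA
  have h : p x = if x i = x i then p x else 0 := by simp
  rw [h]
  exact Finset.single_le_sum (f := fun x' => if x' i = x i then p x' else 0)
    (fun x' _ => by by_cases hxx : x' i = x i <;> simp [hxx, hp x']) (Finset.mem_univ x)

lemma avgM_nonneg {n : ℕ} {p : (Fin n → 𝓧) → ℝ} (hp : ∀ x, 0 ≤ p x) (a : 𝓧) :
    0 ≤ avgM p a :=
  div_nonneg (Finset.sum_nonneg fun i _ => margA_nonneg hp i a) (Nat.cast_nonneg n)

lemma avgM_probVec {n : ℕ} (hn : 0 < n) {p : (Fin n → 𝓧) → ℝ} (hp : IsProbVec p) :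
    IsProbVec (avgM p) := by
  refine ⟨avgM_nonneg hp.1, ?_⟩
  unfold avgM
  rw [← Finset.sum_div, Finset.sum_comm]
  have h : ∀ i : Fin n, ∑ a, margA p i a = 1 := fun i => by rw [sum_margA, hp.2]
  rw [Finset.sum_congr rfl fun i _ => h i]
  have hn' : (n : ℝ) ≠ 0 := by exact_mod_cast hn.ne'
  simp [hn']

lemma avgM_pos {n : ℕ} (hn : 0 < n) {p : (Fin n → 𝓧) → ℝ} (hp : ∀ x, 0 ≤ p x)
    {x : Fin n → 𝓧} (hx : 0 < p x) (i : Fin n) : 0 < avgM p (x i) := by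
  have h1 : p x ≤ margA p i (x i) := le_margA hp i x
  have h2 : margA p i (x i) ≤ ∑ j, margA p j (x i) :=
    Finset.single_le_sum (fun j _ => margA_nonneg hp j (x i)) (Finset.mem_univ i)
  have hn' : (0 : ℝ) < n := by exact_mod_cast hn
  exact div_pos (lt_of_lt_of_le hx (h1.trans h2)) hn'

lemma cross_id {n : ℕ} {W : 𝓧 → 𝓨 → ℝ} (hW : IsChannel W) (p : (Fin n → 𝓧) → ℝ)
    (i : Fin n) (g : 𝓧 → 𝓨 → ℝ) :
    ∑ x, ∑ y, p x * nCh W n x y * g (x i) (y i)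
      = ∑ a, ∑ c, margA p i a * W a c * g a c := by
  have h1 : ∀ x : Fin n → 𝓧,
      ∑ y : Fin n → 𝓨, nCh W n x y * g (x i) (y i) = ∑ c, W (x i) c * g (x i) c :=
    fun x => sum_coord (fun j => W (x j)) (fun j => (hW _).2) i (g (x i))
  calc ∑ x, ∑ y, p x * nCh W n x y * g (x i) (y i)
      = ∑ x, p x * ∑ y, nCh W n x y * g (x i) (y i) := by
        refine Finset.sum_congr rfl fun x _ => ?_
        rw [Finset.mul_sum]
        exact Finset.sum_congr rfl fun y _ => by ring
    _ = ∑ x, p x * ∑ c, W (x i) c * g (x i) c :=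
        Finset.sum_congr rfl fun x _ => by rw [h1 x]
    _ = ∑ a, margA p i a * ∑ c, W a c * g a c :=
        (sum_margA_mul p i fun a => ∑ c, W a c * g a c).symm
    _ = ∑ a, ∑ c, margA p i a * W a c * g a c := by
        refine Finset.sum_congr rfl fun a _ => ?_
        rw [Finset.mul_sum]
        exact Finset.sum_congr rfl fun c _ => by ring

lemma energy_id {n : ℕ} (hn : 0 < n) {W : 𝓧 → 𝓨 → ℝ} (hW : IsChannel W)
    (p : (Fin n → 𝓧) → ℝ) (b : 𝓨 → ℝ) :
    outEnergy p (nCh W n) (blockE b) = n * outEnergy (avgM p) W b := by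
  have hn' : (n : ℝ) ≠ 0 := by exact_mod_cast hn.ne'
  have lhs : outEnergy p (nCh W n) (blockE b)
      = ∑ i, ∑ a, ∑ c, margA p i a * W a c * b c := by
    unfold outEnergy outDist blockE
    calc ∑ y, (∑ x, p x * nCh W n x y) * ∑ i, b (y i)
        = ∑ y, ∑ i, ∑ x, p x * nCh W n x y * b (y i) := by
          refine Finset.sum_congr rfl fun y _ => ?_
          calc (∑ x, p x * nCh W n x y) * ∑ i, b (y i)
              = ∑ x, ∑ i, p x * nCh W n x y * b (y i) := by
                rw [Finset.sum_mul]
                exact Finset.sum_congr rfl fun x _ => Finset.mul_sum _ _ _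
            _ = ∑ i, ∑ x, p x * nCh W n x y * b (y i) := Finset.sum_comm
      _ = ∑ i, ∑ y, ∑ x, p x * nCh W n x y * b (y i) := Finset.sum_comm
      _ = ∑ i, ∑ x, ∑ y, p x * nCh W n x y * b (y i) :=
          Finset.sum_congr rfl fun i _ => Finset.sum_comm
      _ = ∑ i, ∑ a, ∑ c, margA p i a * W a c * b c :=
          Finset.sum_congr rfl fun i _ => cross_id hW p i (fun _ c => b c)
  have rhs : (n : ℝ) * outEnergy (avgM p) W b
      = ∑ i, ∑ a, ∑ c, margA p i a * W a c * b c := by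
    unfold outEnergy outDist
    calc (n : ℝ) * ∑ c, (∑ a, avgM p a * W a c) * b c
        = ∑ c, ∑ a, (n : ℝ) * (avgM p a * W a c * b c) := by
          rw [Finset.mul_sum]
          refine Finset.sum_congr rfl fun c _ => ?_
          rw [Finset.sum_mul, Finset.mul_sum]
      _ = ∑ c, ∑ a, ∑ i, margA p i a * W a c * b c := by
          refine Finset.sum_congr rfl fun c _ => Finset.sum_congr rfl fun a _ => ?_
          unfold avgM
          have h : (n : ℝ) * ((∑ i, margA p i a) / n * W a c * b c)
              = (∑ i, margA p i a) * W a c * b c := by field_simp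
          rw [h, Finset.sum_mul, Finset.sum_mul]
      _ = ∑ a, ∑ c, ∑ i, margA p i a * W a c * b c := Finset.sum_comm
      _ = ∑ a, ∑ i, ∑ c, margA p i a * W a c * b c :=
          Finset.sum_congr rfl fun a _ => Finset.sum_comm
      _ = ∑ i, ∑ a, ∑ c, margA p i a * W a c * b c := Finset.sum_comm
  rw [lhs, rhs]

/-- Key single-letterization inequality. -/
lemma mutInfo_nCh_le {n : ℕ} (hn : 0 < n) {p : (Fin n → 𝓧) → ℝ} (hp : IsProbVec p)
    {W : 𝓧 → 𝓨 → ℝ} (hW : IsChannel W) :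
    mutInfo p (nCh W n) ≤ n * mutInfo (avgM p) W := by
  set q : 𝓧 → ℝ := avgM p with hq
  have hqprob : IsProbVec q := avgM_probVec hn hp
  set out1 : 𝓨 → ℝ := outDist q W with hout1def
  set V : (Fin n → 𝓧) → (Fin n → 𝓨) → ℝ := nCh W n with hV
  set outn : (Fin n → 𝓨) → ℝ := outDist p V with houtndef
  set r : (Fin n → 𝓨) → ℝ := fun y => ∏ i, out1 (y i) with hrdef
  have hout1_nonneg : ∀ c, 0 ≤ out1 c := fun c =>
    Finset.sum_nonneg fun a _ => mul_nonneg (hqprob.1 a) ((hW a).1 c)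
  have hout1_sum : ∑ c, out1 c = 1 := by
    rw [hout1def]
    unfold outDist
    rw [Finset.sum_comm]
    calc ∑ a, ∑ c, q a * W a c = ∑ a, q a := by
          refine Finset.sum_congr rfl fun a _ => ?_
          rw [← Finset.mul_sum, (hW a).2, mul_one]
      _ = 1 := hqprob.2
  have houtn_nonneg : ∀ y, 0 ≤ outn y := fun y =>
    Finset.sum_nonneg fun x _ => mul_nonneg (hp.1 x) (nCh_nonneg hW x y)
  have houtn_sum : ∑ y, outn y = 1 := by
    rw [houtndef]
    unfold outDist
    rw [Finset.sum_comm]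
    calc ∑ x, ∑ y, p x * V x y = ∑ x, p x := by
          refine Finset.sum_congr rfl fun x _ => ?_
          rw [← Finset.mul_sum, hV, nCh_rowsum hW, mul_one]
      _ = 1 := hp.2
  have hr_nonneg : ∀ y, 0 ≤ r y := fun y => Finset.prod_nonneg fun i _ => hout1_nonneg _
  have hr_sum : ∑ y, r y = 1 := by
    rw [hrdef]
    rw [sum_pi_prod (fun _ => out1)]
    simp [hout1_sum]
  -- Step A : the cross term equals n * mutInfo q W
  have stepA : ∑ i, ∑ x, ∑ y, p x * V x y * Real.log (W (x i) (y i) / out1 (y i))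
      = (n : ℝ) * mutInfo q W := by
    have hn' : (n : ℝ) ≠ 0 := by exact_mod_cast hn.ne'
    calc ∑ i, ∑ x, ∑ y, p x * V x y * Real.log (W (x i) (y i) / out1 (y i))
        = ∑ i, ∑ a, ∑ c, margA p i a * W a c * Real.log (W a c / out1 c) :=
          Finset.sum_congr rfl fun i _ =>
            cross_id hW p i (fun a c => Real.log (W a c / out1 c))
      _ = ∑ a, ∑ c, ∑ i, margA p i a * W a c * Real.log (W a c / out1 c) := by
          rw [Finset.sum_comm]
          exact Finset.sum_congr rfl fun a _ => Finset.sum_comm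
      _ = ∑ a, ∑ c, (n : ℝ) * (q a * W a c * Real.log (W a c / out1 c)) := by
          refine Finset.sum_congr rfl fun a _ => Finset.sum_congr rfl fun c _ => ?_
          rw [hq]
          unfold avgM
          rw [← Finset.sum_mul, ← Finset.sum_mul]
          field_simp
      _ = (n : ℝ) * mutInfo q W := by
          unfold mutInfo
          rw [Finset.mul_sum]
          exact Finset.sum_congr rfl fun a _ => by rw [Finset.mul_sum]
  -- termwise Gibbs bound
  have hterm : ∀ x y, p x * V x y * Real.log (V x y / outn y)
      ≤ p x * V x y * (∑ i, Real.log (W (x i) (y i) / out1 (y i)))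
        + p x * V x y * (r y / outn y - 1) := by
    intro x y
    rcases eq_or_lt_of_le (mul_nonneg (hp.1 x) (nCh_nonneg hW x y)) with hJ | hJ
    · rw [← hJ]; simp
    · have hpx : 0 < p x := by
        rcases (hp.1 x).lt_or_eq with h | h
        · exact h
        · exfalso; rw [← h, zero_mul] at hJ; exact lt_irrefl 0 hJ
      have hVxy : 0 < V x y := by
        rcases (nCh_nonneg hW x y).lt_or_eq with h | h
        · exact h
        · exfalso; rw [← h, mul_zero] at hJ; exact lt_irrefl 0 hJ
      have hWi : ∀ i, 0 < W (x i) (y i) := by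
        intro i
        rcases ((hW (x i)).1 (y i)).lt_or_eq with h | h
        · exact h
        · exfalso
          have : V x y = 0 := by
            rw [hV]
            unfold nCh
            exact Finset.prod_eq_zero (Finset.mem_univ i) h.symm
          rw [this] at hVxy; exact lt_irrefl 0 hVxy
      have hqi : ∀ i, 0 < q (x i) := fun i => avgM_pos hn hp.1 hpx i
      have hout1i : ∀ i, 0 < out1 (y i) := by
        intro i
        have hle : q (x i) * W (x i) (y i) ≤ out1 (y i) := by
          rw [hout1def]
          unfold outDist
          exact Finset.single_le_sum
            (f := fun a => q a * W a (y i))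
            (fun a _ => mul_nonneg (hqprob.1 a) ((hW a).1 (y i))) (Finset.mem_univ (x i))
        exact lt_of_lt_of_le (mul_pos (hqi i) (hWi i)) hle
      have houtny : 0 < outn y := by
        have hle : p x * V x y ≤ outn y := by
          rw [houtndef]
          unfold outDist
          exact Finset.single_le_sum
            (f := fun x' => p x' * V x' y)
            (fun x' _ => mul_nonneg (hp.1 x') (nCh_nonneg hW x' y)) (Finset.mem_univ x)
        exact lt_of_lt_of_le hJ hle
      have hry : 0 < r y := Finset.prod_pos fun i _ => hout1i i
      have hsumlog : ∑ i, Real.log (W (x i) (y i) / out1 (y i))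
          = Real.log (V x y / r y) := by
        rw [← Real.log_prod (s := Finset.univ) (f := fun i => W (x i) (y i) / out1 (y i)) (fun i _ => ne_of_gt (div_pos (hWi i) (hout1i i)))]
        congr 1
        rw [Finset.prod_div_distrib, hV, hrdef]
        rfl
      have hlogsplit : Real.log (V x y / outn y)
          = Real.log (V x y / r y) + Real.log (r y / outn y) := by
        rw [← Real.log_mul (ne_of_gt (div_pos hVxy hry)) (ne_of_gt (div_pos hry houtny))]
        congr 1
        field_simp
      have hgibbs : Real.log (r y / outn y) ≤ r y / outn y - 1 :=
        Real.log_le_sub_one_of_pos (div_pos hry houtny)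
      calc p x * V x y * Real.log (V x y / outn y)
          = p x * V x y * Real.log (V x y / r y)
            + p x * V x y * Real.log (r y / outn y) := by rw [hlogsplit]; ring
        _ ≤ p x * V x y * Real.log (V x y / r y)
            + p x * V x y * (r y / outn y - 1) := by
            have := mul_le_mul_of_nonneg_left hgibbs (le_of_lt hJ)
            linarith
        _ = p x * V x y * (∑ i, Real.log (W (x i) (y i) / out1 (y i)))
            + p x * V x y * (r y / outn y - 1) := by rw [hsumlog]
  -- sum of slack terms is ≤ 0
  have hslack : ∑ x, ∑ y, p x * V x y * (r y / outn y - 1) ≤ 0 := by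
    have h1 : ∑ x, ∑ y, p x * V x y * (r y / outn y - 1)
        = ∑ y, outn y * (r y / outn y - 1) := by
      rw [Finset.sum_comm]
      refine Finset.sum_congr rfl fun y _ => ?_
      rw [houtndef]
      unfold outDist
      rw [Finset.sum_mul]
    have h2 : ∀ y, outn y * (r y / outn y - 1) ≤ r y - outn y := by
      intro y
      rcases (houtn_nonneg y).lt_or_eq with h | h
      · have : outn y * (r y / outn y - 1) = r y - outn y := by
          field_simp
        rw [this]
      · rw [← h]; simpa using hr_nonneg y
    calc ∑ x, ∑ y, p x * V x y * (r y / outn y - 1)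
        = ∑ y, outn y * (r y / outn y - 1) := h1
      _ ≤ ∑ y, (r y - outn y) := Finset.sum_le_sum fun y _ => h2 y
      _ = 0 := by rw [Finset.sum_sub_distrib, hr_sum, houtn_sum]; ring
  -- combine
  have main : mutInfo p V
      ≤ ∑ i, ∑ x, ∑ y, p x * V x y * Real.log (W (x i) (y i) / out1 (y i)) := by
    have swap : ∑ i, ∑ x, ∑ y, p x * V x y * Real.log (W (x i) (y i) / out1 (y i))
        = ∑ x, ∑ y, p x * V x y * (∑ i, Real.log (W (x i) (y i) / out1 (y i))) := by
      rw [Finset.sum_comm]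
      refine Finset.sum_congr rfl fun x _ => ?_
      rw [Finset.sum_comm]
      refine Finset.sum_congr rfl fun y _ => ?_
      rw [Finset.mul_sum]
    rw [swap]
    have : mutInfo p V = ∑ x, ∑ y, p x * V x y * Real.log (V x y / outn y) := rfl
    rw [this]
    calc ∑ x, ∑ y, p x * V x y * Real.log (V x y / outn y)
        ≤ ∑ x, ∑ y, (p x * V x y * (∑ i, Real.log (W (x i) (y i) / out1 (y i)))
            + p x * V x y * (r y / outn y - 1)) :=
          Finset.sum_le_sum fun x _ => Finset.sum_le_sum fun y _ => hterm x y
      _ = ∑ x, ∑ y, p x * V x y * (∑ i, Real.log (W (x i) (y i) / out1 (y i)))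
            + ∑ x, ∑ y, p x * V x y * (r y / outn y - 1) := by
          rw [← Finset.sum_add_distrib]
          exact Finset.sum_congr rfl fun x _ => Finset.sum_add_distrib
      _ ≤ ∑ x, ∑ y, p x * V x y * (∑ i, Real.log (W (x i) (y i) / out1 (y i))) + 0 := by
          linarith [hslack]
      _ = ∑ x, ∑ y, p x * V x y * (∑ i, Real.log (W (x i) (y i) / out1 (y i))) := by ring
  calc mutInfo p (nCh W n) = mutInfo p V := rfl
    _ ≤ ∑ i, ∑ x, ∑ y, p x * V x y * Real.log (W (x i) (y i) / out1 (y i)) := main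
    _ = (n : ℝ) * mutInfo q W := stepA

/-- Mutual information is at most `log |𝓨|`. -/
lemma mutInfo_le_log_card_s4 {q : 𝓧 → ℝ} (hq : IsProbVec q) {W : 𝓧 → 𝓨 → ℝ}
    (hW : IsChannel W) : mutInfo q W ≤ Real.log (Fintype.card 𝓨) := by
  by_cases hcard : Fintype.card 𝓨 = 0
  · have : IsEmpty 𝓨 := Fintype.card_eq_zero_iff.mp hcard
    have h0 : mutInfo q W = 0 := by
      unfold mutInfo
      simp
    rw [h0, hcard]
    simp
  · have hK : (0 : ℝ) < Fintype.card 𝓨 := by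
      have := Nat.pos_of_ne_zero hcard
      exact_mod_cast this
    set K : ℝ := (Fintype.card 𝓨 : ℝ) with hKdef
    set out : 𝓨 → ℝ := outDist q W with houtdef
    have hout_nonneg : ∀ c, 0 ≤ out c := fun c =>
      Finset.sum_nonneg fun a _ => mul_nonneg (hq.1 a) ((hW a).1 c)
    have hout_sum : ∑ c, out c = 1 := by
      rw [houtdef]
      unfold outDist
      rw [Finset.sum_comm]
      calc ∑ a, ∑ c, q a * W a c = ∑ a, q a := by
            refine Finset.sum_congr rfl fun a _ => ?_
            rw [← Finset.mul_sum, (hW a).2, mul_one]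
        _ = 1 := hq.2
    have step1 : mutInfo q W ≤ ∑ c, out c * (-Real.log (out c)) := by
      have t1 : ∀ a c, q a * W a c * Real.log (W a c / out c)
          ≤ q a * W a c * (-Real.log (out c)) := by
        intro a c
        rcases eq_or_lt_of_le (mul_nonneg (hq.1 a) ((hW a).1 c)) with hJ | hJ
        · rw [← hJ]; simp
        · have hWac : 0 < W a c := by
            rcases ((hW a).1 c).lt_or_eq with h | h
            · exact h
            · exfalso; rw [← h, mul_zero] at hJ; exact lt_irrefl 0 hJ
          have houtc : 0 < out c := by
            have hle : q a * W a c ≤ out c := by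
              rw [houtdef]
              unfold outDist
              exact Finset.single_le_sum (f := fun a' => q a' * W a' c)
                (fun a' _ => mul_nonneg (hq.1 a') ((hW a').1 c)) (Finset.mem_univ a)
            exact lt_of_lt_of_le hJ hle
          have hW1 : W a c ≤ 1 := by
            calc W a c ≤ ∑ c', W a c' :=
                  Finset.single_le_sum (fun c' _ => (hW a).1 c') (Finset.mem_univ c)
              _ = 1 := (hW a).2
          have : Real.log (W a c / out c) ≤ -Real.log (out c) := by
            rw [Real.log_div (ne_of_gt hWac) (ne_of_gt houtc)]
            have : Real.log (W a c) ≤ 0 := Real.log_nonpos (le_of_lt hWac) hW1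
            linarith
          exact mul_le_mul_of_nonneg_left this (le_of_lt hJ)
      calc mutInfo q W ≤ ∑ a, ∑ c, q a * W a c * (-Real.log (out c)) :=
            Finset.sum_le_sum fun a _ => Finset.sum_le_sum fun c _ => t1 a c
        _ = ∑ c, out c * (-Real.log (out c)) := by
            rw [Finset.sum_comm]
            refine Finset.sum_congr rfl fun c _ => ?_
            rw [houtdef]
            unfold outDist
            rw [Finset.sum_mul]
      -- done step1
    have step2 : ∑ c, out c * (-Real.log (out c)) ≤ Real.log K := by
      have t2 : ∀ c, out c * (-Real.log (out c)) ≤ 1 / K - out c + out c * Real.log K := by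
        intro c
        rcases (hout_nonneg c).lt_or_eq with h | h
        · have hgibbs : Real.log ((1 / K) / out c) ≤ (1 / K) / out c - 1 :=
            Real.log_le_sub_one_of_pos (div_pos (div_pos one_pos hK) h)
          rw [Real.log_div (ne_of_gt (div_pos one_pos hK)) (ne_of_gt h),
            Real.log_div one_ne_zero (ne_of_gt hK)] at hgibbs
          have := mul_le_mul_of_nonneg_left hgibbs (le_of_lt h)
          have hiden : out c * ((1 / K) / out c - 1) = 1 / K - out c := by
            field_simp
          rw [hiden] at this
          have hlog1 : Real.log (1 : ℝ) = 0 := Real.log_one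
          nlinarith [this]
        · rw [← h]
          simp
          positivity
      calc ∑ c, out c * (-Real.log (out c))
          ≤ ∑ c, (1 / K - out c + out c * Real.log K) :=
            Finset.sum_le_sum fun c _ => t2 c
        _ = (Fintype.card 𝓨 : ℝ) * (1 / K) - 1 + Real.log K := by
            rw [Finset.sum_add_distrib, Finset.sum_sub_distrib, ← Finset.sum_mul,
              hout_sum]
            simp
        _ = Real.log K := by
            rw [hKdef]
            field_simp
            ring
    exact step1.trans step2

/-- Product (i.i.d.) distribution. -/
def prodD {n : ℕ} (q : 𝓧 → ℝ) : (Fin n → 𝓧) → ℝ := fun x => ∏ i, q (x i)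

lemma prodD_probVec {n : ℕ} {q : 𝓧 → ℝ} (hq : IsProbVec q) :
    IsProbVec (prodD (n := n) q) := by
  constructor
  · intro x; exact Finset.prod_nonneg fun i _ => hq.1 _
  · unfold prodD
    rw [sum_pi_prod (fun _ => q)]
    simp [hq.2]

lemma margA_prodD {n : ℕ} {q : 𝓧 → ℝ} (hq : IsProbVec q) (i : Fin n) (a : 𝓧) :
    margA (prodD q) i a = q a := by
  unfold margA prodD
  have h : ∀ x : Fin n → 𝓧, (if x i = a then (∏ j, q (x j)) else 0)
      = (∏ j, q (x j)) * (if x i = a then 1 else 0) := fun x => by split <;> simp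
  rw [Finset.sum_congr rfl fun x _ => h x,
    sum_coord (fun _ => q) (fun _ => hq.2) i (fun a' => if a' = a then 1 else 0)]
  simp

lemma avgM_prodD {n : ℕ} (hn : 0 < n) {q : 𝓧 → ℝ} (hq : IsProbVec q) :
    avgM (prodD (n := n) q) = q := by
  funext a
  unfold avgM
  rw [Finset.sum_congr rfl fun i _ => margA_prodD hq i a, Finset.sum_const,
    Finset.card_fin, nsmul_eq_mul]
  have hn' : (n : ℝ) ≠ 0 := by exact_mod_cast hn.ne'
  field_simp

lemma sum_fin1 {α : Type} [Fintype α] (f : (Fin 1 → α) → ℝ) :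
    ∑ x : Fin 1 → α, f x = ∑ a : α, f (fun _ => a) := by
  apply Fintype.sum_equiv (Equiv.funUnique (Fin 1) α)
  intro x
  exact congrArg f (funext fun i => congrArg x (Subsingleton.elim i default))

lemma fin1_rep (p : (Fin 1 → 𝓧) → ℝ) (x : Fin 1 → 𝓧) : p x = p (fun _ => x 0) :=
  congrArg p (funext fun i => congrArg x (Subsingleton.elim i 0))

lemma nCh_one {W : 𝓧 → 𝓨 → ℝ} (x : Fin 1 → 𝓧) (y : Fin 1 → 𝓨) :
    nCh W 1 x y = W (x 0) (y 0) :=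
  Fin.prod_univ_one _

lemma outDist_one (q : 𝓧 → ℝ) (W : 𝓧 → 𝓨 → ℝ) (y : Fin 1 → 𝓨) :
    outDist (fun x : Fin 1 → 𝓧 => q (x 0)) (nCh W 1) y = outDist q W (y 0) := by
  unfold outDist
  rw [sum_fin1 (fun x : Fin 1 → 𝓧 => q (x 0) * nCh W 1 x y)]
  simp [nCh_one]

lemma mutInfo_one (q : 𝓧 → ℝ) (W : 𝓧 → 𝓨 → ℝ) :
    mutInfo (fun x : Fin 1 → 𝓧 => q (x 0)) (nCh W 1) = mutInfo q W := by
  unfold mutInfo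
  rw [sum_fin1]
  refine Finset.sum_congr rfl fun a _ => ?_
  rw [sum_fin1 (fun y : Fin 1 → 𝓨 => q a * nCh W 1 (fun _ => a) y *
    Real.log (nCh W 1 (fun _ => a) y / outDist (fun x : Fin 1 → 𝓧 => q (x 0)) (nCh W 1) y))]
  refine Finset.sum_congr rfl fun c _ => ?_
  rw [outDist_one, nCh_one]

lemma outEnergy_one (q : 𝓧 → ℝ) (W : 𝓧 → 𝓨 → ℝ) (b : 𝓨 → ℝ) :
    outEnergy (fun x : Fin 1 → 𝓧 => q (x 0)) (nCh W 1) (blockE b) = outEnergy q W b := by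
  unfold outEnergy
  rw [sum_fin1 (fun y : Fin 1 → 𝓨 =>
    outDist (fun x : Fin 1 → 𝓧 => q (x 0)) (nCh W 1) y * blockE b y)]
  refine Finset.sum_congr rfl fun c _ => ?_
  rw [outDist_one]
  unfold blockE
  rw [Fin.sum_univ_one]

lemma probVec_one {q : 𝓧 → ℝ} (hq : IsProbVec q) :
    IsProbVec (fun x : Fin 1 → 𝓧 => q (x 0)) := by
  refine ⟨fun x => hq.1 _, ?_⟩
  rw [sum_fin1 (fun x : Fin 1 → 𝓧 => q (x 0))]
  exact hq.2

lemma probVec_one' {p : (Fin 1 → 𝓧) → ℝ} (hp : IsProbVec p) :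
    IsProbVec (fun a : 𝓧 => p (fun _ => a)) := by
  refine ⟨fun a => hp.1 _, ?_⟩
  rw [← sum_fin1 (fun x : Fin 1 → 𝓧 => p (fun _ => x 0))]
  rw [← hp.2]
  exact Finset.sum_congr rfl fun x _ => (fin1_rep p x).symm

lemma setS1_eq {L : ℕ} [Nonempty (Fin L)] (W : Fin L → 𝓧 → 𝓨 → ℝ) (b : 𝓨 → ℝ) (B : ℝ) :
    { r | ∃ p : (Fin 1 → 𝓧) → ℝ, IsProbVec p ∧
        (∀ ℓ, ((1 : ℕ) : ℝ) * B ≤ outEnergy p (nCh (W ℓ) 1) (blockE b)) ∧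
        r = ⨅ ℓ, mutInfo p (nCh (W ℓ) 1) }
    = { r | ∃ q : 𝓧 → ℝ, IsProbVec q ∧ (∀ ℓ, B ≤ outEnergy q (W ℓ) b) ∧
        r = ⨅ ℓ, mutInfo q (W ℓ) } := by
  ext r
  simp only [Set.mem_setOf_eq, Nat.cast_one, one_mul]
  constructor
  · rintro ⟨p, hp, hE, hr⟩
    set q : 𝓧 → ℝ := fun a => p (fun _ => a) with hqdef
    have hpq : p = fun x : Fin 1 → 𝓧 => q (x 0) := funext fun x => fin1_rep p x
    refine ⟨q, probVec_one' hp, fun ℓ => ?_, ?_⟩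
    · have := hE ℓ
      rw [hpq, outEnergy_one] at this
      exact this
    · rw [hr]
      exact iInf_congr fun ℓ => by rw [hpq, mutInfo_one]
  · rintro ⟨q, hq, hE, hr⟩
    refine ⟨fun x : Fin 1 → 𝓧 => q (x 0), probVec_one hq, fun ℓ => ?_, ?_⟩
    · rw [outEnergy_one]; exact hE ℓ
    · rw [hr]
      exact iInf_congr fun ℓ => by rw [mutInfo_one]

end AuxIT

/-- **The multicast capacity-energy function equals its single-letter version:**
for any multicast DMC and any `0 ≤ B ≤ B_max`,
`C(B) = sup_{n ≥ 1} (1/n)·C_n(B) = C_1(B)`. -/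
theorem Ccap_eq_single_letter
    {𝓧 𝓨 : Type} [Fintype 𝓧] [Fintype 𝓨] [Nonempty 𝓧] {L : ℕ} (hL : 0 < L)
    (W : Fin L → 𝓧 → 𝓨 → ℝ) (hW : ∀ ℓ, IsChannel (W ℓ))
    (b : 𝓨 → ℝ) (hb : ∀ y, 0 ≤ b y)
    (B : ℝ) (hB0 : 0 ≤ B) (hB : B ≤ Bmax W b) :
    CcapEq W b B = CnEq W b B 1 := by
  classical
  haveI : Nonempty (Fin L) := ⟨⟨0, hL⟩⟩
  by_cases hA : ∃ q : 𝓧 → ℝ, IsProbVec q ∧ ∀ ℓ, B ≤ outEnergy q (W ℓ) b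
  · obtain ⟨q0, hq0, hE0⟩ := hA
    set Sm : Set ℝ := { r | ∃ q : 𝓧 → ℝ, IsProbVec q ∧ (∀ ℓ, B ≤ outEnergy q (W ℓ) b) ∧
        r = ⨅ ℓ, mutInfo q (W ℓ) } with hSmdef
    have hSm_bdd : ∀ r ∈ Sm, r ≤ Real.log (Fintype.card 𝓨) := by
      rintro r ⟨q, hq, hE, rfl⟩
      calc (⨅ ℓ, mutInfo q (W ℓ)) ≤ mutInfo q (W ⟨0, hL⟩) :=
            ciInf_le (Set.finite_range _).bddBelow _
        _ ≤ Real.log (Fintype.card 𝓨) := mutInfo_le_log_card_s4 hq (hW _)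
    have hC1_eq : CnEq W b B 1 = sSup Sm := by
      unfold CnEq
      rw [hSmdef, ← setS1_eq W b B]
    have hmem : ∀ q : 𝓧 → ℝ, IsProbVec q → (∀ ℓ, B ≤ outEnergy q (W ℓ) b) →
        (⨅ ℓ, mutInfo q (W ℓ)) ≤ sSup Sm := fun q hq hE =>
      le_csSup ⟨_, hSm_bdd⟩ ⟨q, hq, hE, rfl⟩
    have conv : ∀ n : ℕ, 0 < n → CnEq W b B n ≤ (n : ℝ) * sSup Sm := by
      intro n hn
      unfold CnEq
      apply csSup_le
      · refine ⟨_, prodD q0, prodD_probVec hq0, fun ℓ => ?_, rfl⟩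
        rw [energy_id hn (hW ℓ) (prodD q0) b, avgM_prodD hn hq0]
        exact mul_le_mul_of_nonneg_left (hE0 ℓ) (Nat.cast_nonneg n)
      · rintro r ⟨p, hp, hE, rfl⟩
        have hadm : ∀ ℓ, B ≤ outEnergy (avgM p) (W ℓ) b := by
          intro ℓ
          have h1 := hE ℓ
          rw [energy_id hn (hW ℓ) p b] at h1
          have hn' : (0 : ℝ) < n := by exact_mod_cast hn
          exact le_of_mul_le_mul_left h1 hn'
        obtain ⟨ℓ0, hℓ0⟩ := Finite.exists_min (fun ℓ => mutInfo (avgM p) (W ℓ))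
        have hinf_eq : (⨅ ℓ, mutInfo (avgM p) (W ℓ)) = mutInfo (avgM p) (W ℓ0) :=
          le_antisymm (ciInf_le (Set.finite_range _).bddBelow ℓ0) (le_ciInf hℓ0)
        calc (⨅ ℓ, mutInfo p (nCh (W ℓ) n)) ≤ mutInfo p (nCh (W ℓ0) n) :=
              ciInf_le (Set.finite_range _).bddBelow ℓ0
          _ ≤ (n : ℝ) * mutInfo (avgM p) (W ℓ0) := mutInfo_nCh_le hn hp (hW ℓ0)
          _ = (n : ℝ) * (⨅ ℓ, mutInfo (avgM p) (W ℓ)) := by rw [hinf_eq]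
          _ ≤ (n : ℝ) * sSup Sm :=
              mul_le_mul_of_nonneg_left
                (hmem _ (avgM_probVec hn hp) hadm) (Nat.cast_nonneg n)
    have hdiv : ∀ n : ℕ+, CnEq W b B n / ((n : ℕ) : ℝ) ≤ sSup Sm := by
      intro n
      have hn' : (0 : ℝ) < ((n : ℕ) : ℝ) := by exact_mod_cast n.pos
      rw [div_le_iff₀ hn']
      calc CnEq W b B n ≤ ((n : ℕ) : ℝ) * sSup Sm := conv n n.pos
        _ = sSup Sm * ((n : ℕ) : ℝ) := mul_comm _ _
    have hbdd : BddAbove (Set.range fun n : ℕ+ => CnEq W b B n / ((n : ℕ) : ℝ)) := by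
      refine ⟨sSup Sm, ?_⟩
      rintro r ⟨n, rfl⟩
      exact hdiv n
    have hle : CcapEq W b B ≤ sSup Sm := ciSup_le hdiv
    have h1 : CnEq W b B ((1 : ℕ+) : ℕ) / (((1 : ℕ+) : ℕ) : ℝ) = sSup Sm := by
      have e1 : ((1 : ℕ+) : ℕ) = 1 := rfl
      rw [e1, hC1_eq]
      norm_num
    have hge : sSup Sm ≤ CcapEq W b B := by
      rw [← h1]
      exact le_ciSup hbdd (1 : ℕ+)
    rw [hC1_eq]
    exact le_antisymm hle hge
  · have hempty : ∀ n : ℕ, 0 < n →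
        { r | ∃ p : (Fin n → 𝓧) → ℝ, IsProbVec p ∧
          (∀ ℓ, (n : ℝ) * B ≤ outEnergy p (nCh (W ℓ) n) (blockE b)) ∧
          r = ⨅ ℓ, mutInfo p (nCh (W ℓ) n) } = ∅ := by
      intro n hn
      ext r
      simp only [Set.mem_setOf_eq, Set.mem_empty_iff_false, iff_false, not_exists]
      rintro p ⟨hp, hE, -⟩
      refine hA ⟨avgM p, avgM_probVec hn hp, fun ℓ => ?_⟩
      have h1 := hE ℓ
      rw [energy_id hn (hW ℓ) p b] at h1
      have hn' : (0 : ℝ) < n := by exact_mod_cast hn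
      exact le_of_mul_le_mul_left h1 hn'
    have hCn0 : ∀ n : ℕ, 0 < n → CnEq W b B n = 0 := by
      intro n hn
      unfold CnEq
      rw [hempty n hn]
      exact Real.sSup_empty
    have hcap : CcapEq W b B = 0 := by
      unfold CcapEq
      have hz : ∀ n : ℕ+, CnEq W b B ((n : ℕ)) / (((n : ℕ)) : ℝ) = 0 := fun n => by
        rw [hCn0 n n.pos]; simp
      calc (⨆ n : ℕ+, CnEq W b B ((n : ℕ)) / (((n : ℕ)) : ℝ))
          = ⨆ _ : ℕ+, (0 : ℝ) := by
            exact iSup_congr hz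
        _ = 0 := ciSup_const
    rw [hcap, hCn0 1 one_pos]

end
end
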